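/- arXiv:2404.11123 — 3 statements merged into one kernel-verified Lean document; each statement's English description precedes it below -/
import Mathlib

section
/- Let h ∈ 𝔽_q[t] be a nonzero polynomial and N a non-negative integer. Then the Haar measure of the set of β in 𝕋 = {α ∈ 𝔽_q((t⁻¹)) : |α| < 1} such that ‖hβ‖ < q^{-N} equals q^{-N}. -/
open scoped Classical NNReal
open Polynomial MeasureTheory

noncomputable section

/-! ## The field `K∞ = 𝔽_q((1/t))`, modelled as formal Laurent series in `τ = t⁻¹` -/

/-- `t`, as an element of `K∞ = 𝔽_q((τ))` with `τ = t⁻¹`: the Laurent series `single (-1) 1`. -/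
def tK (Fq : Type) [Field Fq] : LaurentSeries Fq := HahnSeries.single (-1 : ℤ) 1

/-- The canonical embedding of the polynomial ring `𝔽_q[t]` into `K∞`. -/
def polyToK (Fq : Type) [Field Fq] (p : Polynomial Fq) : LaurentSeries Fq :=
  Polynomial.eval₂ HahnSeries.C (tK Fq) p

/-- The absolute value `|α| = q^{ord α}` on `K∞` (with `|0| = 0`). -/
def absK (Fq : Type) [Field Fq] [Fintype Fq] (α : LaurentSeries Fq) : ℝ≥0 :=
  if α = 0 then 0 else (Fintype.card Fq : ℝ≥0) ^ (-(HahnSeries.order α))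

/-- Sup-absolute value of a vector. -/
def vabs (Fq : Type) [Field Fq] [Fintype Fq] {R : ℕ} (β : Fin R → LaurentSeries Fq) : ℝ≥0 :=
  Finset.univ.sup fun k => absK Fq (β k)

/-- `‖α‖`: the distance from `α` to the ring of polynomials `𝔽_q[t]`;
this equals `|{α}|` where `{α}` is the fractional part of `α`. -/
def distP (Fq : Type) [Field Fq] [Fintype Fq] (α : LaurentSeries Fq) : ℝ≥0 :=
  sInf {r : ℝ≥0 | ∃ b : Polynomial Fq, r = absK Fq (α - polyToK Fq b)}

/-- The unit ball `𝕋 = {α ∈ K∞ : |α| < 1}`. -/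
def TT (Fq : Type) [Field Fq] [Fintype Fq] : Set (LaurentSeries Fq) := {α | absK Fq α < 1}

/-- The unit polydisc `𝕋^n`. -/
def TTn (Fq : Type) [Field Fq] [Fintype Fq] (n : ℕ) : Set (Fin n → LaurentSeries Fq) :=
  {v | ∀ i, absK Fq (v i) < 1}

/-- The standard additive character `ψ` of `K∞`:
`ψ(α) = exp(2πi·tr(a₋₁)/p)` where `a₋₁` is the coefficient of `t⁻¹` in `α`. -/
def psiK (Fq : Type) [Field Fq] [Fintype Fq] (p : ℕ) [CharP Fq p] (α : LaurentSeries Fq) : ℂ :=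
  letI : Algebra (ZMod p) Fq := (ZMod.castHom dvd_rfl Fq).toAlgebra
  Complex.exp (2 * Real.pi * Complex.I *
    ((Algebra.trace (ZMod p) Fq (α.coeff 1)).val : ℂ) / (p : ℂ))

/-- The polynomial with coefficient vector `v`; as `v` ranges over `Fin P → Fq` this
parametrises exactly the polynomials of norm `< q^P`, i.e. of degree `< P`. -/
def polyOf (Fq : Type) [Field Fq] {P : ℕ} (v : Fin P → Fq) : Polynomial Fq :=
  ∑ j : Fin P, Polynomial.C (v j) * Polynomial.X ^ (j : ℕ)

/-! ## Zariski-closed sets, irreducibility, dimension and degree -/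

/-- A Zariski-closed subset of affine `n`-space. -/
def ZarClosed (F : Type) [Field F] (n : ℕ) (S : Set (Fin n → F)) : Prop :=
  ∃ T : Set (MvPolynomial (Fin n) F), S = {x | ∀ f ∈ T, MvPolynomial.eval x f = 0}

/-- Irreducibility of a set with respect to the Zariski topology. -/
def IrredSet (F : Type) [Field F] (n : ℕ) (S : Set (Fin n → F)) : Prop :=
  S.Nonempty ∧ ∀ C₁ C₂ : Set (Fin n → F), ZarClosed F n C₁ → ZarClosed F n C₂ →
    S ⊆ C₁ ∪ C₂ → S ⊆ C₁ ∨ S ⊆ C₂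

/-- Dimension of a subset of affine space: the length of the longest chain of
irreducible Zariski-closed subsets contained in it. -/
def zdim (F : Type) [Field F] (n : ℕ) (S : Set (Fin n → F)) : ℕ :=
  sSup {m : ℕ | ∃ c : Fin (m + 1) → Set (Fin n → F),
    (∀ i, ZarClosed F n (c i) ∧ IrredSet F n (c i) ∧ c i ⊆ S) ∧ StrictMono c}

/-- Degree of an (irreducible) affine variety `S`: the largest (finite) number of points in
which an affine-linear subspace of complementary dimension can meet `S`. -/
def zdeg (F : Type) [Field F] (n : ℕ) (S : Set (Fin n → F)) : ℕ :=
  sSup {m : ℕ | ∃ L : AffineSubspace F (Fin n → F),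
    Module.finrank F L.direction = n - zdim F n S ∧
    (S ∩ (L : Set (Fin n → F))).Finite ∧ (S ∩ (L : Set (Fin n → F))).ncard = m}

/-! ## Smooth complete intersections and counting functions -/

/-- `f₁, …, f_R` are forms of degree `d` cutting out a smooth complete intersection
of codimension `R` in `ℙ^{n-1}`: they are homogeneous of degree `d`, the affine cone has
dimension `n - R`, and the Jacobian matrix has full rank `R` at every nonzero point of the
cone over the algebraic closure. -/
def SmoothCI (Fq : Type) [Field Fq] {n R : ℕ} (d : ℕ)
    (f : Fin R → MvPolynomial (Fin n) Fq) : Prop :=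
  (∀ k, (f k).IsHomogeneous d) ∧
  zdim (AlgebraicClosure Fq) n
      {x : Fin n → AlgebraicClosure Fq | ∀ k, MvPolynomial.aeval x (f k) = 0} = n - R ∧
  ∀ x : Fin n → AlgebraicClosure Fq, x ≠ 0 → (∀ k, MvPolynomial.aeval x (f k) = 0) →
    Matrix.rank (Matrix.of fun (k : Fin R) (i : Fin n) =>
      MvPolynomial.aeval x (MvPolynomial.pderiv i (f k))) = R

/-- The number of `z ∈ 𝔽_q[t]^n` with `|z| < q^D`, satisfying the side condition `extra`,
and with `f_k(z) ≡ 0 (mod g)` for all `k`. -/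
def NsolP (Fq : Type) [Field Fq] {n R : ℕ} (f : Fin R → MvPolynomial (Fin n) Fq)
    (g : Polynomial Fq) (D : ℕ) (extra : (Fin n → Polynomial Fq) → Prop) : ℕ :=
  Nat.card {z : Fin n → Polynomial Fq //
    (∀ i, (z i).degree < (D : WithBot ℕ)) ∧ extra z ∧
    ∀ k, g ∣ MvPolynomial.aeval z (f k)}

/-! ## Exponential sums -/

/-- The exponential sum `S(α; P) = Σ_{|x| < q^P} ψ(α · f(mx + b))`. -/
def Ssum (Fq : Type) [Field Fq] [Fintype Fq] (p : ℕ) [CharP Fq p] {n R : ℕ}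
    (f : Fin R → MvPolynomial (Fin n) Fq) (m : Polynomial Fq) (b : Fin n → Polynomial Fq)
    (α : Fin R → LaurentSeries Fq) (P : ℕ) : ℂ :=
  ∑ x : Fin n → Fin P → Fq,
    psiK Fq p (∑ k, α k *
      polyToK Fq (MvPolynomial.aeval (fun i => m * polyOf Fq (x i) + b i) (f k)))

/-- The complete exponential sum `S_g(a) = |g|^{-n} Σ_{|y| < |g|} ψ(a · f(my + b) / g)`. -/
def SgSum (Fq : Type) [Field Fq] [Fintype Fq] (p : ℕ) [CharP Fq p] {n R : ℕ}
    (f : Fin R → MvPolynomial (Fin n) Fq) (m : Polynomial Fq) (b : Fin n → Polynomial Fq)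
    (g : Polynomial Fq) (a : Fin R → Polynomial Fq) : ℂ :=
  ((Fintype.card Fq : ℂ) ^ (g.natDegree * n))⁻¹ *
    ∑ y : Fin n → Fin g.natDegree → Fq,
      psiK Fq p (∑ k, polyToK Fq (a k) *
        polyToK Fq (MvPolynomial.aeval (fun i => m * polyOf Fq (y i) + b i) (f k)) /
        polyToK Fq g)

/-! ## Forms given by symmetric coefficients, and their multilinear forms -/

/-- Symmetry of a system of degree-`d` coefficients. -/
def SymCoeffs (Fq : Type) [Field Fq] (d n : ℕ) (c : (Fin d → Fin n) → Fq) : Prop :=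
  ∀ (σ : Equiv.Perm (Fin d)) (s : Fin d → Fin n), c (s ∘ σ) = c s

/-- Evaluation of the degree-`d` form with coefficients `c`:
`f(x) = Σ_{i₁,…,i_d} c_{i₁…i_d} x_{i₁} ⋯ x_{i_d}`. -/
def formEval (Fq : Type) [Field Fq] {A : Type} [CommRing A] (d n : ℕ) (φ : Fq →+* A)
    (c : (Fin d → Fin n) → Fq) (x : Fin n → A) : A :=
  ∑ s : Fin d → Fin n, φ (c s) * ∏ j, x (s j)

/-- The `i`-th multilinear form of the form with symmetric coefficients `c`:
`Ψ_i(x^{(1)},…,x^{(d-1)}) = d! Σ c_{i₁…i_{d-1} i} x^{(1)}_{i₁} ⋯ x^{(d-1)}_{i_{d-1}}`. -/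
def psiML (Fq : Type) [Field Fq] {A : Type} [CommRing A] (d n : ℕ) (φ : Fq →+* A)
    (c : (Fin d → Fin n) → Fq) (i : Fin n) (u : Fin (d - 1) → Fin n → A) : A :=
  (Nat.factorial d : A) * ∑ idx : Fin (d - 1) → Fin n,
    φ (c fun j => if h : (j : ℕ) < d - 1 then idx ⟨(j : ℕ), h⟩ else i) * ∏ j, u j (idx j)

/-- The exponential sum `S(α; P)` for the system of forms with coefficients `c`. -/
def SsumC (Fq : Type) [Field Fq] [Fintype Fq] (p : ℕ) [CharP Fq p] (d n R : ℕ)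
    (c : Fin R → (Fin d → Fin n) → Fq) (m : Polynomial Fq) (b : Fin n → Polynomial Fq)
    (α : Fin R → LaurentSeries Fq) (P : ℕ) : ℂ :=
  ∑ x : Fin n → Fin P → Fq,
    psiK Fq p (∑ k, α k * polyToK Fq
      (formEval Fq d n Polynomial.C (c k) fun i => m * polyOf Fq (x i) + b i))

/-! ## The field `F = algebraic closure of 𝔽_q(t)` and the Birch singular loci -/

/-- An algebraically closed field containing `𝔽_q[t]`. -/
abbrev FF (Fq : Type) [Field Fq] : Type := AlgebraicClosure (FractionRing (Polynomial Fq))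

/-- The embedding `𝔽_q[t] → F`. -/
def embPoly (Fq : Type) [Field Fq] : Polynomial Fq →+* FF Fq :=
  (algebraMap (FractionRing (Polynomial Fq)) (FF Fq)).comp
    (algebraMap (Polynomial Fq) (FractionRing (Polynomial Fq)))

/-- The embedding `𝔽_q → F`. -/
def embFq (Fq : Type) [Field Fq] : Fq →+* FF Fq := (embPoly Fq).comp Polynomial.C

/-- `σ_f`: the maximum over nonzero `h ∈ 𝔽_q[t]^R` of the dimension of the locus
`V_{h·f} = {x : h₁∇f₁(x) + ⋯ + h_R ∇f_R(x) = 0}`. -/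
def sigmaF (Fq : Type) [Field Fq] {n R : ℕ} (f : Fin R → MvPolynomial (Fin n) Fq) : ℕ :=
  sSup {s : ℕ | ∃ h : Fin R → Polynomial Fq, h ≠ 0 ∧
    s = zdim (FF Fq) n {x : Fin n → FF Fq | ∀ i : Fin n,
      ∑ k, embPoly Fq (h k) *
        MvPolynomial.eval₂ (embFq Fq) x (MvPolynomial.pderiv i (f k)) = 0}}

/-! ## Auxiliary lemmas for statement1 -/

section Aux1
variable {Fq : Type} [Field Fq] [Fintype Fq]

set_option linter.unusedSectionVars false

lemma one_lt_qnn : (1:ℝ≥0) < (Fintype.card Fq : ℝ≥0) := by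
  exact_mod_cast Fintype.one_lt_card

lemma qnn_ne_zero : (Fintype.card Fq : ℝ≥0) ≠ 0 := by positivity

lemma absK_lt_zpow_iff {α : LaurentSeries Fq} {k : ℤ} :
    absK Fq α < (Fintype.card Fq : ℝ≥0) ^ k ↔ ∀ i : ℤ, i ≤ -k → α.coeff i = 0 := by
  unfold absK
  split_ifs with h
  · subst h
    simp [zpow_pos (lt_trans one_pos (one_lt_qnn (Fq := Fq))) k]
  · rw [zpow_lt_zpow_iff_right₀ one_lt_qnn, neg_lt]
    constructor
    · intro hlt i hi
      by_contra hne
      exact absurd (HahnSeries.order_le_of_coeff_ne_zero hne) (by omega)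
    · intro hc
      by_contra hlt
      push_neg at hlt
      exact (mt HahnSeries.coeff_order_eq_zero.mp h) (hc _ (by omega))

lemma absK_mul (α β : LaurentSeries Fq) :
    absK Fq (α * β) = absK Fq α * absK Fq β := by
  by_cases hα : α = 0
  · simp [hα, absK]
  by_cases hβ : β = 0
  · simp [hβ, absK]
  unfold absK
  rw [if_neg hα, if_neg hβ, if_neg (mul_ne_zero hα hβ), HahnSeries.order_mul hα hβ,
    neg_add, zpow_add₀ qnn_ne_zero]

lemma absK_sub_le (α β : LaurentSeries Fq) :
    absK Fq (α - β) ≤ max (absK Fq α) (absK Fq β) := by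
  by_cases hα : α = 0
  · simp [hα, absK]
  by_cases hβ : β = 0
  · simp [hβ, absK]
  by_cases hαβ : α - β = 0
  · simp [hαβ, absK]
  have hmin : min α.order (-β).order ≤ (α - β).order := by
    have := HahnSeries.min_order_le_order_add (x := α) (y := -β) (by rwa [← sub_eq_add_neg])
    rwa [← sub_eq_add_neg] at this
  rw [HahnSeries.order_neg] at hmin
  unfold absK
  rw [if_neg hα, if_neg hβ, if_neg hαβ]
  rcases le_total α.order β.order with hc | hc
  · refine le_max_of_le_left ?_
    refine zpow_le_zpow_right₀ one_lt_qnn.le ?_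
    have : α.order ≤ (α - β).order := le_trans (by simp [min_le_iff, hc]) hmin
    omega
  · refine le_max_of_le_right ?_
    refine zpow_le_zpow_right₀ one_lt_qnn.le ?_
    have : β.order ≤ (α - β).order := le_trans (by simp [min_le_iff, hc]) hmin
    omega

lemma polyToK_coeff (p : Polynomial Fq) (k : ℤ) :
    (polyToK Fq p).coeff k = if k ≤ 0 then p.coeff (-k).toNat else 0 := by
  unfold polyToK tK
  rw [Polynomial.eval₂_eq_sum_range]
  have hterm : ∀ i : ℕ, HahnSeries.C (p.coeff i) * (HahnSeries.single (-1:ℤ) (1:Fq)) ^ i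
      = HahnSeries.single (-(i:ℤ)) (p.coeff i) := by
    intro i
    rw [HahnSeries.single_pow, HahnSeries.C_apply, HahnSeries.single_mul_single]
    simp
  simp_rw [hterm]
  have hcoeff : (∑ i ∈ Finset.range (p.natDegree + 1),
      HahnSeries.single (-(i:ℤ)) (p.coeff i)).coeff k
      = ∑ i ∈ Finset.range (p.natDegree + 1),
        (HahnSeries.single (-(i:ℤ)) (p.coeff i)).coeff k :=
    map_sum (HahnSeries.coeff.addMonoidHom k) _ _
  rw [hcoeff]
  simp only [HahnSeries.coeff_single]
  split_ifs with hk
  · by_cases hle : (-k).toNat ≤ p.natDegree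
    · rw [Finset.sum_eq_single ((-k).toNat)]
      · rw [if_pos (by omega)]
      · intro b _ hb
        rw [if_neg (by omega)]
      · intro hmem
        exact absurd (Finset.mem_range.mpr (by omega)) hmem
    · rw [Finset.sum_eq_zero, Polynomial.coeff_eq_zero_of_natDegree_lt (by omega)]
      intro i hi
      rw [Finset.mem_range] at hi
      rw [if_neg (by omega)]
  · apply Finset.sum_eq_zero
    intro i _
    rw [if_neg (by omega)]

lemma polyToK_ne_zero {p : Polynomial Fq} (hp : p ≠ 0) : polyToK Fq p ≠ 0 := by
  intro h
  have := polyToK_coeff p (-(p.natDegree : ℤ))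
  rw [h] at this
  simp only [HahnSeries.coeff_zero, neg_neg, Int.toNat_natCast] at this
  rw [if_pos (by omega)] at this
  exact Polynomial.leadingCoeff_ne_zero.mpr hp this.symm

lemma order_polyToK {p : Polynomial Fq} (hp : p ≠ 0) :
    (polyToK Fq p).order = -(p.natDegree : ℤ) := by
  have hc : (polyToK Fq p).coeff (-(p.natDegree : ℤ)) ≠ 0 := by
    rw [polyToK_coeff, if_pos (by omega)]
    simpa using Polynomial.leadingCoeff_ne_zero.mpr hp
  refine le_antisymm (HahnSeries.order_le_of_coeff_ne_zero hc) ?_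
  have hone := mt HahnSeries.coeff_order_eq_zero.mp (polyToK_ne_zero hp)
  rw [polyToK_coeff] at hone
  by_cases h0 : (polyToK Fq p).order ≤ 0
  · rw [if_pos h0] at hone
    have := Polynomial.le_natDegree_of_ne_zero hone
    omega
  · rw [if_neg h0] at hone
    exact absurd rfl hone

lemma absK_polyToK {p : Polynomial Fq} (hp : p ≠ 0) :
    absK Fq (polyToK Fq p) = (Fintype.card Fq : ℝ≥0) ^ (p.natDegree : ℤ) := by
  unfold absK
  rw [if_neg (polyToK_ne_zero hp), order_polyToK hp, neg_neg]

lemma polyToK_sub (a b : Polynomial Fq) :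
    polyToK Fq (a - b) = polyToK Fq a - polyToK Fq b :=
  map_sub (Polynomial.eval₂RingHom (HahnSeries.C : Fq →+* LaurentSeries Fq) (tK Fq)) a b

lemma polyOf_coeff {P : ℕ} (v : Fin P → Fq) (j : ℕ) :
    (polyOf Fq v).coeff j = if h : j < P then v ⟨j, h⟩ else 0 := by
  unfold polyOf
  rw [Polynomial.finset_sum_coeff]
  simp only [Polynomial.coeff_C_mul, Polynomial.coeff_X_pow, mul_ite, mul_one, mul_zero]
  split_ifs with h
  · rw [Finset.sum_eq_single (⟨j, h⟩ : Fin P)]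
    · simp
    · intro b _ hb
      rw [if_neg (by simpa [Fin.ext_iff] using fun hj => hb (by simp [Fin.ext_iff, hj.symm]))]
    · simp
  · apply Finset.sum_eq_zero
    intro i _
    rw [if_neg (by omega)]

lemma degree_polyOf {P : ℕ} (v : Fin P → Fq) : (polyOf Fq v).degree < (P : ℕ) := by
  rw [Polynomial.degree_lt_iff_coeff_zero]
  intro m hm
  rw [polyOf_coeff, dif_neg (by exact_mod_cast not_lt.mpr (by exact_mod_cast hm))]

lemma polyOf_of_degree_lt {e : ℕ} {b : Polynomial Fq} (hb : b.degree < (e : ℕ)) :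
    polyOf Fq (fun j : Fin e => b.coeff j) = b := by
  ext j
  rw [polyOf_coeff]
  split_ifs with h
  · rfl
  · exact (Polynomial.coeff_eq_zero_of_degree_lt
      (lt_of_lt_of_le hb (by exact_mod_cast not_lt.mp h))).symm

lemma polyOf_injective {e : ℕ} : Function.Injective (polyOf Fq (P := e)) := by
  intro v w hvw
  funext j
  have := congrArg (fun p => Polynomial.coeff p (j : ℕ)) hvw
  simpa [polyOf_coeff, j.is_lt] using this

/-- Measure of the ball of radius `q^{-m}` centred at `c`. -/
lemma measure_ball_eq [MeasurableSpace (LaurentSeries Fq)] {μ : Measure (LaurentSeries Fq)}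
    (hinv : ∀ (a : LaurentSeries Fq) (s : Set (LaurentSeries Fq)), μ ((a + ·) ⁻¹' s) = μ s)
    (hball : ∀ (c : LaurentSeries Fq) (k : ℤ),
      MeasurableSet {α : LaurentSeries Fq | absK Fq (α - c) < (Fintype.card Fq : ℝ≥0) ^ k})
    (hT : μ (TT Fq) = 1) (m : ℕ) (c : LaurentSeries Fq) :
    μ {α : LaurentSeries Fq | absK Fq (α - c) < (Fintype.card Fq : ℝ≥0) ^ (-(m:ℤ))}
      = (Fintype.card Fq : ENNReal) ^ (-(m:ℤ)) := by
  have htrans : ∀ (k : ℤ) (c : LaurentSeries Fq),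
      μ {α : LaurentSeries Fq | absK Fq (α - c) < (Fintype.card Fq : ℝ≥0) ^ k}
      = μ {α : LaurentSeries Fq | absK Fq (α - 0) < (Fintype.card Fq : ℝ≥0) ^ k} := by
    intro k c
    have hset : {α : LaurentSeries Fq | absK Fq (α - c) < (Fintype.card Fq : ℝ≥0) ^ k}
        = ((-c) + ·) ⁻¹'
          {α : LaurentSeries Fq | absK Fq (α - 0) < (Fintype.card Fq : ℝ≥0) ^ k} := by
      ext x
      simp [Set.mem_setOf_eq, neg_add_eq_sub]
    rw [hset, hinv]
  rw [htrans _ c]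
  induction m with
  | zero =>
    have hset : {α : LaurentSeries Fq | absK Fq (α - 0) < (Fintype.card Fq : ℝ≥0) ^ (-(0:ℕ):ℤ)}
        = TT Fq := by
      ext α
      simp [TT, Set.mem_setOf_eq]
    rw [hset, hT]
    simp
  | succ m ih =>
    have hq0 : (Fintype.card Fq : ENNReal) ≠ 0 := by
      simp [Fintype.card_ne_zero]
    have hqt : (Fintype.card Fq : ENNReal) ≠ ⊤ := ENNReal.natCast_ne_top _
    have hcast : (-(((m+1):ℕ)) : ℤ) = -((m:ℤ)+1) := by push_cast; ring
    rw [hcast]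
    -- partition the ball of radius q^{-m} into card Fq balls of radius q^{-(m+1)}
    have hpart : {α : LaurentSeries Fq | absK Fq (α - 0) < (Fintype.card Fq : ℝ≥0) ^ (-(m:ℤ))}
        = ⋃ a : Fq, {α : LaurentSeries Fq |
            absK Fq (α - HahnSeries.single ((m:ℤ)+1) a)
              < (Fintype.card Fq : ℝ≥0) ^ (-((m:ℤ)+1))} := by
      ext α
      simp only [Set.mem_setOf_eq, Set.mem_iUnion, sub_zero, absK_lt_zpow_iff]
      constructor
      · intro hc
        refine ⟨α.coeff ((m:ℤ)+1), fun i hi => ?_⟩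
        rw [HahnSeries.coeff_sub, HahnSeries.coeff_single]
        rcases eq_or_ne i ((m:ℤ)+1) with h | h
        · rw [if_pos h, h, sub_self]
        · rw [if_neg h, sub_zero]
          exact hc i (by omega)
      · rintro ⟨a, ha⟩ i hi
        have := ha i (by omega)
        rw [HahnSeries.coeff_sub, HahnSeries.coeff_single,
          if_neg (by omega), sub_zero] at this
        exact this
    have hdisj : Pairwise (Function.onFun Disjoint (fun a : Fq =>
        {α : LaurentSeries Fq |
          absK Fq (α - HahnSeries.single ((m:ℤ)+1) a)
            < (Fintype.card Fq : ℝ≥0) ^ (-((m:ℤ)+1))})) := by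
      intro a a' haa'
      rw [Function.onFun, Set.disjoint_left]
      intro β hβ hβ'
      rw [Set.mem_setOf_eq, absK_lt_zpow_iff] at hβ hβ'
      have h1 := hβ ((m:ℤ)+1) (by omega)
      have h2 := hβ' ((m:ℤ)+1) (by omega)
      rw [HahnSeries.coeff_sub, HahnSeries.coeff_single_same, sub_eq_zero] at h1 h2
      exact haa' (h1.symm.trans h2)
    have hmeas : ∀ a : Fq, MeasurableSet {α : LaurentSeries Fq |
        absK Fq (α - HahnSeries.single ((m:ℤ)+1) a)
          < (Fintype.card Fq : ℝ≥0) ^ (-((m:ℤ)+1))} :=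
      fun a => hball _ _
    have key : (Fintype.card Fq : ENNReal) *
        μ {α : LaurentSeries Fq | absK Fq (α - 0) < (Fintype.card Fq : ℝ≥0) ^ (-((m:ℤ)+1))}
        = (Fintype.card Fq : ENNReal) ^ (-(m:ℤ)) := by
      rw [← ih, hpart, measure_iUnion hdisj hmeas, tsum_fintype]
      rw [Finset.sum_congr rfl (fun a _ => htrans (-((m:ℤ)+1)) (HahnSeries.single ((m:ℤ)+1) a)),
        Finset.sum_const, nsmul_eq_mul]
      simp
    refine (ENNReal.mul_right_inj hq0 hqt).mp ?_
    rw [key]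
    rw [show (Fintype.card Fq : ENNReal) ^ (-(m:ℤ))
        = (Fintype.card Fq : ENNReal) ^ (1 + (-((m:ℤ)+1))) by ring_nf,
      ENNReal.zpow_add hq0 hqt, zpow_one]

lemma absK_neg (α : LaurentSeries Fq) : absK Fq (-α) = absK Fq α := by
  unfold absK
  rw [HahnSeries.order_neg, neg_eq_zero]

lemma absK_add_le (α β : LaurentSeries Fq) :
    absK Fq (α + β) ≤ max (absK Fq α) (absK Fq β) := by
  have : α + β = α - (-β) := by ring
  rw [this]
  refine le_trans (absK_sub_le _ _) ?_
  rw [absK_neg]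

lemma mem_iff_ball {h : Polynomial Fq} (hh : h ≠ 0) (N : ℕ) (β : LaurentSeries Fq) :
    (β ∈ TT Fq ∧ distP Fq (polyToK Fq h * β) < (Fintype.card Fq : ℝ≥0) ^ (-(N:ℤ)))
    ↔ ∃ v : Fin h.natDegree → Fq,
        absK Fq (β - polyToK Fq (polyOf Fq v) / polyToK Fq h)
          < (Fintype.card Fq : ℝ≥0) ^ (-((N:ℤ) + h.natDegree)) := by
  set q : ℝ≥0 := (Fintype.card Fq : ℝ≥0) with hqdef
  set e := h.natDegree with he
  set H := polyToK Fq h with hHdef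
  have hHne : H ≠ 0 := polyToK_ne_zero hh
  have hq1 : (1:ℝ≥0) < q := one_lt_qnn
  have hqe_pos : (0:ℝ≥0) < q ^ (e:ℤ) := zpow_pos (lt_trans one_pos hq1) _
  have hmulH : ∀ γ : LaurentSeries Fq, absK Fq (H * γ) = q ^ (e:ℤ) * absK Fq γ := by
    intro γ
    rw [absK_mul, absK_polyToK hh]
  have hHc : ∀ v : Fin e → Fq, H * (polyToK Fq (polyOf Fq v) / H) = polyToK Fq (polyOf Fq v) :=
    fun v => mul_div_cancel₀ _ hHne
  have hsplit : q ^ (-(N:ℤ)) = q ^ (e:ℤ) * q ^ (-((N:ℤ) + e)) := by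
    rw [← zpow_add₀ qnn_ne_zero]
    congr 1
    omega
  constructor
  · rintro ⟨hβT, hβd⟩
    unfold distP at hβd
    have hne : {r : ℝ≥0 | ∃ b : Polynomial Fq, r = absK Fq (H * β - polyToK Fq b)}.Nonempty :=
      ⟨absK Fq (H * β - polyToK Fq 0), 0, rfl⟩
    obtain ⟨r, ⟨b, rfl⟩, hr⟩ := exists_lt_of_csInf_lt hne hβd
    have hdegb : b.degree < (e : ℕ) := by
      by_cases hb0 : b = 0
      · rw [hb0, Polynomial.degree_zero]
        exact WithBot.bot_lt_coe (e : ℕ)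
      · have h1 : absK Fq (polyToK Fq b) < q ^ (e:ℤ) := by
          have heq : polyToK Fq b = (H * β) - (H * β - polyToK Fq b) := by ring
          rw [heq]
          refine lt_of_le_of_lt (absK_sub_le _ _) (max_lt ?_ ?_)
          · rw [hmulH]
            calc q ^ (e:ℤ) * absK Fq β < q ^ (e:ℤ) * 1 := by
                  exact (mul_lt_mul_iff_right₀ hqe_pos).mpr hβT
              _ = q ^ (e:ℤ) := mul_one _
          · exact lt_of_lt_of_le hr (zpow_le_zpow_right₀ hq1.le (by omega))
        rw [absK_polyToK hb0, zpow_lt_zpow_iff_right₀ hq1] at h1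
        exact (Polynomial.natDegree_lt_iff_degree_lt hb0).mp (by exact_mod_cast h1)
    refine ⟨fun j => b.coeff j, ?_⟩
    have hb : polyOf Fq (fun j : Fin e => b.coeff (j : ℕ)) = b := polyOf_of_degree_lt hdegb
    have heq2 : H * (β - polyToK Fq (polyOf Fq (fun j : Fin e => b.coeff (j : ℕ))) / H)
        = H * β - polyToK Fq b := by
      rw [mul_sub, hHc, hb]
    have h3 : q ^ (e:ℤ) * absK Fq (β - polyToK Fq (polyOf Fq (fun j : Fin e => b.coeff (j : ℕ))) / H)
        < q ^ (e:ℤ) * q ^ (-((N:ℤ) + e)) := by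
      rw [← hmulH, heq2, ← hsplit]
      exact hr
    exact (mul_lt_mul_iff_right₀ hqe_pos).mp h3
  · rintro ⟨v, hv⟩
    have habscv : absK Fq (polyToK Fq (polyOf Fq v) / H) < 1 := by
      by_cases hv0 : polyOf Fq v = 0
      · rw [hv0, show polyToK Fq (0 : Polynomial Fq) = 0 from Polynomial.eval₂_zero _ _,
          zero_div]
        simp [absK]
      · have h1 : q ^ (e:ℤ) * absK Fq (polyToK Fq (polyOf Fq v) / H)
            = absK Fq (polyToK Fq (polyOf Fq v)) := by
          rw [← hmulH, hHc]
        have h2 : absK Fq (polyToK Fq (polyOf Fq v)) < q ^ (e:ℤ) := by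
          rw [absK_polyToK hv0]
          rw [zpow_lt_zpow_iff_right₀ hq1]
          exact_mod_cast (Polynomial.natDegree_lt_iff_degree_lt hv0).mpr (degree_polyOf v)
        have h3 : q ^ (e:ℤ) * absK Fq (polyToK Fq (polyOf Fq v) / H)
            < q ^ (e:ℤ) * 1 := by
          rw [h1, mul_one]
          exact h2
        exact (mul_lt_mul_iff_right₀ hqe_pos).mp h3
    have hγ1 : absK Fq (β - polyToK Fq (polyOf Fq v) / H) < 1 := by
      refine lt_of_lt_of_le hv ?_
      calc q ^ (-((N:ℤ) + e)) ≤ q ^ (0:ℤ) := zpow_le_zpow_right₀ hq1.le (by omega)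
        _ = 1 := zpow_zero q
    constructor
    · show absK Fq β < 1
      have : β = (β - polyToK Fq (polyOf Fq v) / H) + polyToK Fq (polyOf Fq v) / H := by ring
      rw [this]
      exact lt_of_le_of_lt (absK_add_le _ _) (max_lt hγ1 habscv)
    · have hle : distP Fq (H * β) ≤ absK Fq (H * β - polyToK Fq (polyOf Fq v)) :=
        csInf_le (OrderBot.bddBelow _) ⟨polyOf Fq v, rfl⟩
      refine lt_of_le_of_lt hle ?_
      have heq2 : H * β - polyToK Fq (polyOf Fq v)
          = H * (β - polyToK Fq (polyOf Fq v) / H) := by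
        rw [mul_sub, hHc]
      rw [heq2, hmulH, hsplit]
      exact (mul_lt_mul_iff_right₀ hqe_pos).mpr hv

end Aux1

/-- Lemma 2.2. For any `N ≥ 0` and nonzero `h ∈ 𝔽_q[t]`, the Haar
measure (normalised so that `𝕋` has measure `1`) of `{β ∈ 𝕋 : ‖hβ‖ < q^{-N}}` is `q^{-N}`. -/
theorem statement1 (Fq : Type) [Field Fq] [Fintype Fq]
    [MeasurableSpace (LaurentSeries Fq)] (μ : Measure (LaurentSeries Fq))
    (hinv : ∀ (a : LaurentSeries Fq) (s : Set (LaurentSeries Fq)), μ ((a + ·) ⁻¹' s) = μ s)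
    (hball : ∀ (c : LaurentSeries Fq) (k : ℤ),
      MeasurableSet {α : LaurentSeries Fq | absK Fq (α - c) < (Fintype.card Fq : ℝ≥0) ^ k})
    (hT : μ (TT Fq) = 1)
    (h : Polynomial Fq) (hh : h ≠ 0) (N : ℕ) :
    μ {β : LaurentSeries Fq | β ∈ TT Fq ∧
        distP Fq (polyToK Fq h * β) < (Fintype.card Fq : ℝ≥0) ^ (-(N : ℤ))}
      = (Fintype.card Fq : ENNReal) ^ (-(N : ℤ)) := by
  have hq0 : (Fintype.card Fq : ENNReal) ≠ 0 := by simp [Fintype.card_ne_zero]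
  have hqt : (Fintype.card Fq : ENNReal) ≠ ⊤ := ENNReal.natCast_ne_top _
  have hq1 : (1:ℝ≥0) < (Fintype.card Fq : ℝ≥0) := one_lt_qnn
  have hqe_pos : (0:ℝ≥0) < (Fintype.card Fq : ℝ≥0) ^ (h.natDegree : ℤ) :=
    zpow_pos (lt_trans one_pos hq1) _
  have hHne : polyToK Fq h ≠ 0 := polyToK_ne_zero hh
  have hset : {β : LaurentSeries Fq | β ∈ TT Fq ∧
      distP Fq (polyToK Fq h * β) < (Fintype.card Fq : ℝ≥0) ^ (-(N : ℤ))}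
      = ⋃ v : Fin h.natDegree → Fq, {β : LaurentSeries Fq |
          absK Fq (β - polyToK Fq (polyOf Fq v) / polyToK Fq h)
            < (Fintype.card Fq : ℝ≥0) ^ (-(((N + h.natDegree) : ℕ) : ℤ))} := by
    ext β
    simp only [Set.mem_setOf_eq, Set.mem_iUnion]
    rw [show (-(((N + h.natDegree) : ℕ) : ℤ)) = -((N:ℤ) + (h.natDegree:ℤ)) by push_cast; ring]
    exact mem_iff_ball hh N β
  have hdisj : Pairwise (Function.onFun Disjoint (fun v : Fin h.natDegree → Fq =>
      {β : LaurentSeries Fq | absK Fq (β - polyToK Fq (polyOf Fq v) / polyToK Fq h)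
        < (Fintype.card Fq : ℝ≥0) ^ (-(((N + h.natDegree) : ℕ) : ℤ))})) := by
    intro v w hvw
    rw [Function.onFun, Set.disjoint_left]
    intro β hβv hβw
    rw [Set.mem_setOf_eq] at hβv hβw
    have hbne : polyOf Fq v - polyOf Fq w ≠ 0 :=
      sub_ne_zero.mpr fun hc => hvw (polyOf_injective hc)
    have h1 : (1:ℝ≥0) ≤ absK Fq (polyToK Fq (polyOf Fq v - polyOf Fq w)) := by
      rw [absK_polyToK hbne]
      calc (1:ℝ≥0) = (Fintype.card Fq : ℝ≥0) ^ (0:ℤ) := (zpow_zero _).symm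
        _ ≤ _ := zpow_le_zpow_right₀ hq1.le (by positivity)
    have hfac : polyToK Fq (polyOf Fq v - polyOf Fq w)
        = polyToK Fq h * (polyToK Fq (polyOf Fq v) / polyToK Fq h
            - polyToK Fq (polyOf Fq w) / polyToK Fq h) := by
      rw [polyToK_sub]
      field_simp
    have hcontr : (1:ℝ≥0) < 1 := by
      calc (1:ℝ≥0) ≤ absK Fq (polyToK Fq (polyOf Fq v - polyOf Fq w)) := h1
        _ = (Fintype.card Fq : ℝ≥0) ^ (h.natDegree : ℤ)
            * absK Fq (polyToK Fq (polyOf Fq v) / polyToK Fq h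
                - polyToK Fq (polyOf Fq w) / polyToK Fq h) := by
            rw [hfac, absK_mul, absK_polyToK hh]
        _ ≤ (Fintype.card Fq : ℝ≥0) ^ (h.natDegree : ℤ)
            * max (absK Fq (β - polyToK Fq (polyOf Fq w) / polyToK Fq h))
                  (absK Fq (β - polyToK Fq (polyOf Fq v) / polyToK Fq h)) := by
            refine mul_le_mul_right ?_ _
            rw [show polyToK Fq (polyOf Fq v) / polyToK Fq h
                - polyToK Fq (polyOf Fq w) / polyToK Fq h
                = (β - polyToK Fq (polyOf Fq w) / polyToK Fq h)
                  - (β - polyToK Fq (polyOf Fq v) / polyToK Fq h) by ring]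
            exact absK_sub_le _ _
        _ < (Fintype.card Fq : ℝ≥0) ^ (h.natDegree : ℤ)
            * (Fintype.card Fq : ℝ≥0) ^ (-(((N + h.natDegree) : ℕ) : ℤ)) :=
            (mul_lt_mul_iff_right₀ hqe_pos).mpr (max_lt hβw hβv)
        _ = (Fintype.card Fq : ℝ≥0) ^ (-(N:ℤ)) := by
            rw [← zpow_add₀ qnn_ne_zero]
            congr 1
            push_cast
            ring
        _ ≤ 1 := by
            calc (Fintype.card Fq : ℝ≥0) ^ (-(N:ℤ))
                ≤ (Fintype.card Fq : ℝ≥0) ^ (0:ℤ) := zpow_le_zpow_right₀ hq1.le (by omega)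
              _ = 1 := zpow_zero _
    exact absurd hcontr (lt_irrefl 1)
  rw [hset, measure_iUnion hdisj (fun v => hball _ _), tsum_fintype]
  have heach : ∀ v : Fin h.natDegree → Fq,
      μ {β : LaurentSeries Fq | absK Fq (β - polyToK Fq (polyOf Fq v) / polyToK Fq h)
          < (Fintype.card Fq : ℝ≥0) ^ (-(((N + h.natDegree) : ℕ) : ℤ))}
        = (Fintype.card Fq : ENNReal) ^ (-(((N + h.natDegree) : ℕ) : ℤ)) :=
    fun v => measure_ball_eq hinv hball hT (N + h.natDegree) _
  rw [Finset.sum_congr rfl (fun v _ => heach v), Finset.sum_const, nsmul_eq_mul]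
  simp only [Finset.card_univ, Fintype.card_fun, Fintype.card_fin]
  rw [Nat.cast_pow, ← zpow_natCast (Fintype.card Fq : ENNReal), ← ENNReal.zpow_add hq0 hqt]
  congr 1
  push_cast
  ring
end
end

section
/- Let f_1,…,f_R be degree-d forms over 𝔽_q (char > d) cutting out a smooth complete intersection in ℙ^{n−1}. Let π be a monic irreducible polynomial in 𝔽_q[t], μ ≥ 1 an integer, and b ∈ 𝔽_q[t]^n with gcd(b, π) = 1 and f_i(b) ≡ 0 mod π^μ for all i. For e > μ, let N†(π^e) be the number of z ∈ 𝔽_q[t]^n with |z| < |π^e|, f(z) ≡ 0 mod π^e, and z ≡ b mod π^μ. Then N†(π^e) = |π|^{n−R} · N†(π^{e−1}) for all e ≥ 2 (with e − 1 ≥ μ). -/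
open scoped Classical NNReal
open Polynomial MeasureTheory

noncomputable section

/-! ### Auxiliary lemmas for statement8 -/

/-- First-order Taylor expansion: `f(y + c w) ≡ f(y) + c Σ wᵢ ∂ᵢf(y) mod c²`. -/
lemma st8_mv_taylor {Fq : Type} [Field Fq] {n : ℕ} {A : Type} [CommRing A] [Algebra Fq A]
    (c : A) (y w : Fin n → A) (g : MvPolynomial (Fin n) Fq) :
    c ^ 2 ∣ (MvPolynomial.aeval (fun i => y i + c * w i) g - MvPolynomial.aeval y g -
      c * ∑ i, w i * MvPolynomial.aeval y (MvPolynomial.pderiv i g)) := by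
  induction g using MvPolynomial.induction_on with
  | C a => simp
  | add p q hp hq =>
      have h := dvd_add hp hq
      convert h using 1
      simp only [map_add, mul_add, Finset.sum_add_distrib]
      ring
  | mul_X p i hp =>
      obtain ⟨T, hT⟩ := hp
      have hT' : MvPolynomial.aeval (fun i => y i + c * w i) p =
          MvPolynomial.aeval y p +
            c * ∑ j, w j * MvPolynomial.aeval y (MvPolynomial.pderiv j p) + c ^ 2 * T := by
        rw [← hT]; ring
      have hd : ∀ j : Fin n, MvPolynomial.aeval y (MvPolynomial.pderiv j (p * MvPolynomial.X i))
          = MvPolynomial.aeval y (MvPolynomial.pderiv j p) * y i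
            + (if i = j then MvPolynomial.aeval y p else 0) := by
        intro j
        rw [MvPolynomial.pderiv_mul]
        by_cases h : i = j <;>
          simp [h, MvPolynomial.pderiv_X, Pi.single_apply, mul_comm]
      refine ⟨T * y i + w i * (∑ j, w j * MvPolynomial.aeval y (MvPolynomial.pderiv j p))
        + c * (w i * T), ?_⟩
      simp only [map_mul, MvPolynomial.aeval_X, hd]
      rw [show (∑ j, w j * (MvPolynomial.aeval y (MvPolynomial.pderiv j p) * y i
            + if i = j then MvPolynomial.aeval y p else 0))
          = (∑ j, w j * MvPolynomial.aeval y (MvPolynomial.pderiv j p)) * y i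
            + w i * MvPolynomial.aeval y p by
        simp only [mul_add, Finset.sum_add_distrib, mul_ite, mul_zero, Finset.sum_ite_eq,
          Finset.mem_univ, if_true, Finset.sum_mul, mul_assoc]]
      linear_combination (y i + c * w i) * hT'

/-- If `y ≡ z mod g` componentwise then `p(y) ≡ p(z) mod g`. -/
lemma st8_aeval_dvd_sub {Fq : Type} [Field Fq] {n : ℕ} (g : Polynomial Fq)
    (y z : Fin n → Polynomial Fq) (h : ∀ i, g ∣ (y i - z i)) (p : MvPolynomial (Fin n) Fq) :
    g ∣ MvPolynomial.aeval y p - MvPolynomial.aeval z p := by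
  set I := Ideal.span {g} with hI
  set φ := Ideal.Quotient.mkₐ Fq I with hφ
  have hyz : (fun i => φ (y i)) = fun i => φ (z i) := by
    funext i
    have h0 : φ (y i - z i) = 0 := by
      rw [hφ, Ideal.Quotient.mkₐ_eq_mk, Ideal.Quotient.eq_zero_iff_mem]
      exact Ideal.mem_span_singleton.2 (h i)
    rw [map_sub, sub_eq_zero] at h0
    exact h0
  have h1 : φ (MvPolynomial.aeval y p - MvPolynomial.aeval z p) = 0 := by
    rw [map_sub, MvPolynomial.comp_aeval_apply, MvPolynomial.comp_aeval_apply, hyz, sub_self]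
  rw [hφ, Ideal.Quotient.mkₐ_eq_mk, Ideal.Quotient.eq_zero_iff_mem] at h1
  exact Ideal.mem_span_singleton.mp h1

/-- A set of vectors of polynomials cut out by a degree bound is finite. -/
lemma st8_finite {Fq : Type} [Field Fq] [Fintype Fq] {n D : ℕ}
    (P : (Fin n → Polynomial Fq) → Prop)
    (hP : ∀ z, P z → ∀ i, (z i).degree < (D : WithBot ℕ)) : Finite {z // P z} := by
  haveI : Finite (Polynomial.degreeLT Fq D) :=
    Finite.of_equiv _ (Polynomial.degreeLTEquiv Fq D).toEquiv.symm
  apply Finite.of_injective (β := Fin n → Polynomial.degreeLT Fq D)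
    (fun z => fun i => ⟨z.1 i, Polynomial.mem_degreeLT.2 (hP z.1 z.2 i)⟩)
  intro a b hab
  apply Subtype.ext
  funext i
  exact congrArg Subtype.val (congrFun hab i)

lemma st8_mulVec_surj {K L : Type} [Field K] [Field L] {R n : ℕ}
    (ι : K →+* L) (M : Matrix (Fin R) (Fin n) K)
    (h : (M.map ι).rank = R) : Function.Surjective M.mulVec := by
  have hι : Function.Injective ι := ι.injective
  have hindepL : LinearIndependent L (M.map ι) := by
    refine linearIndependent_iff_card_eq_finrank_span.2 ?_
    rw [Fintype.card_fin, Set.finrank]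
    exact h.symm.trans (Matrix.rank_eq_finrank_span_row _)
  have hindep : LinearIndependent K M := by
    refine Fintype.linearIndependent_iff.2 ?_
    intro c hc k
    have h0 : ∑ k, (ι (c k)) • (M.map ι) k = 0 := by
      funext i
      have h1 := congrFun hc i
      simp only [Finset.sum_apply, Pi.smul_apply, smul_eq_mul, Pi.zero_apply] at h1 ⊢
      have h2 : ι (∑ k, c k * M k i) = ι 0 := by rw [h1]
      simpa [map_sum, Matrix.map_apply] using h2
    have h3 := Fintype.linearIndependent_iff.mp hindepL _ h0 k
    exact hι (by simpa using h3)
  have hrank : M.rank = R := by simpa using hindep.rank_matrix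
  have htop : LinearMap.range M.mulVecLin = ⊤ := by
    apply Submodule.eq_top_of_finrank_eq
    rw [← Matrix.rank, hrank, Module.finrank_pi]
    simp
  intro v
  have := LinearMap.range_eq_top.mp htop v
  simpa using this

lemma st8_card_affine {K : Type} [Field K] [Finite K] {n R : ℕ}
    (M : Matrix (Fin R) (Fin n) K) (hM : Function.Surjective M.mulVec) (v : Fin R → K) :
    Nat.card {w : Fin n → K // M.mulVec w = v} = Nat.card K ^ (n - R) := by
  obtain ⟨w₀, hw₀⟩ := hM v
  have hker : Module.finrank K (LinearMap.ker M.mulVecLin) = n - R := by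
    have h1 := LinearMap.finrank_range_add_finrank_ker M.mulVecLin
    have h2 : LinearMap.range M.mulVecLin = ⊤ := by
      rw [LinearMap.range_eq_top]
      intro u; obtain ⟨x, hx⟩ := hM u; exact ⟨x, by simpa using hx⟩
    rw [h2, finrank_top, Module.finrank_pi, Module.finrank_pi, Fintype.card_fin,
      Fintype.card_fin] at h1
    omega
  have e1 : {w : Fin n → K // M.mulVec w = v} ≃ LinearMap.ker M.mulVecLin := by
    refine ⟨fun w => ⟨w.1 - w₀, ?_⟩, fun u => ⟨u.1 + w₀, ?_⟩, fun w => by simp, fun u => by simp⟩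
    · have : M.mulVec (w.1 - w₀) = 0 := by rw [Matrix.mulVec_sub, w.2, hw₀, sub_self]
      simpa [LinearMap.mem_ker] using this
    · have h : M.mulVec u.1 = 0 := by
        have h := u.2
        simp only [LinearMap.mem_ker, Matrix.mulVecLin_apply] at h
        exact h
      simp [Matrix.mulVec_add, h, hw₀]
  have bb := Module.finBasisOfFinrankEq K (LinearMap.ker M.mulVecLin) hker
  rw [Nat.card_congr (e1.trans bb.equivFun.toEquiv), Nat.card_pi]
  simp

lemma st8_adjoinRoot_finite {Fq : Type} [Field Fq] [Fintype Fq] {π : Polynomial Fq}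
    (hmon : π.Monic) : Finite (AdjoinRoot π) :=
  Finite.of_equiv _ (AdjoinRoot.powerBasis' hmon).basis.equivFun.toEquiv.symm

lemma st8_adjoinRoot_card {Fq : Type} [Field Fq] [Fintype Fq] {π : Polynomial Fq}
    (hmon : π.Monic) : Nat.card (AdjoinRoot π) = Fintype.card Fq ^ π.natDegree := by
  rw [Nat.card_congr (AdjoinRoot.powerBasis' hmon).basis.equivFun.toEquiv, Nat.card_pi]
  rw [Finset.prod_const, Finset.card_univ, Fintype.card_fin, Nat.card_eq_fintype_card]
  rfl

/-- `AdjoinRoot.mk` as an `Fq`-algebra hom. -/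
def st8_mkA {Fq : Type} [Field Fq] (π : Polynomial Fq) : Polynomial Fq →ₐ[Fq] AdjoinRoot π :=
  { AdjoinRoot.mk π with commutes' := fun _ => rfl }

lemma st8_mkA_apply {Fq : Type} [Field Fq] (π : Polynomial Fq) (p : Polynomial Fq) :
    st8_mkA π p = AdjoinRoot.mk π p := rfl

/-- The number of solutions of the linearised congruence in each fibre. -/
lemma st8_fiber_count (Fq : Type) [Field Fq] [Fintype Fq] {n R : ℕ}
    (f : Fin R → MvPolynomial (Fin n) Fq)
    (hJ : ∀ x : Fin n → AlgebraicClosure Fq, x ≠ 0 → (∀ k, MvPolynomial.aeval x (f k) = 0) →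
      Matrix.rank (Matrix.of fun (k : Fin R) (i : Fin n) =>
        MvPolynomial.aeval x (MvPolynomial.pderiv i (f k))) = R)
    (π : Polynomial Fq) (hmon : π.Monic) (hirr : Irreducible π)
    (y b : Fin n → Polynomial Fq)
    (i₀ : Fin n) (hbi : ¬ π ∣ b i₀) (hyb : ∀ i, π ∣ (y i - b i))
    (hfy : ∀ k, π ∣ MvPolynomial.aeval y (f k))
    (U : Fin R → Polynomial Fq) :
    Nat.card {w : Fin n → Polynomial Fq // (∀ i, (w i).degree < π.degree) ∧
      ∀ k, π ∣ (U k + ∑ i, w i * MvPolynomial.aeval y (MvPolynomial.pderiv i (f k)))}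
      = Fintype.card Fq ^ ((n - R) * π.natDegree) := by
  haveI : Fact (Irreducible π) := ⟨hirr⟩
  haveI : Finite (AdjoinRoot π) := st8_adjoinRoot_finite hmon
  haveI : Module.Finite Fq (AdjoinRoot π) :=
    Module.Finite.of_basis (AdjoinRoot.powerBasis' hmon).basis
  haveI : Algebra.IsAlgebraic Fq (AdjoinRoot π) := Algebra.IsAlgebraic.of_finite _ _
  set φ := st8_mkA π with hφdef
  set M : Matrix (Fin R) (Fin n) (AdjoinRoot π) :=
    Matrix.of (fun k i => φ (MvPolynomial.aeval y (MvPolynomial.pderiv i (f k)))) with hM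
  set v : Fin R → AdjoinRoot π := fun k => - φ (U k) with hv
  have hφmk : ∀ p : Polynomial Fq, φ p = AdjoinRoot.mk π p := fun _ => rfl
  have hcond1 : ∀ (w : Fin n → Polynomial Fq) (k : Fin R),
      (π ∣ (U k + ∑ i, w i * MvPolynomial.aeval y (MvPolynomial.pderiv i (f k)))) ↔
        M.mulVec (fun i => φ (w i)) k = v k := by
    intro w k
    have hφX : φ (U k + ∑ i, w i * MvPolynomial.aeval y (MvPolynomial.pderiv i (f k)))
        = φ (U k) + M.mulVec (fun i => φ (w i)) k := by
      simp [Matrix.mulVec, dotProduct, hM, mul_comm]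
    calc (π ∣ (U k + ∑ i, w i * MvPolynomial.aeval y (MvPolynomial.pderiv i (f k))))
        ↔ φ (U k + ∑ i, w i * MvPolynomial.aeval y (MvPolynomial.pderiv i (f k))) = 0 := by
          rw [hφmk, AdjoinRoot.mk_eq_zero]
      _ ↔ φ (U k) + M.mulVec (fun i => φ (w i)) k = 0 := by rw [hφX]
      _ ↔ M.mulVec (fun i => φ (w i)) k = v k := by
          rw [hv, add_comm, add_eq_zero_iff_eq_neg]
  have hcond : ∀ w : Fin n → Polynomial Fq,
      ((∀ k, π ∣ (U k + ∑ i, w i * MvPolynomial.aeval y (MvPolynomial.pderiv i (f k)))) ↔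
        M.mulVec (fun i => φ (w i)) = v) := by
    intro w
    rw [funext_iff]
    exact forall_congr' (hcond1 w)
  -- surjectivity of the linearised system, via smoothness
  let ι : AdjoinRoot π →ₐ[Fq] AlgebraicClosure Fq := IsAlgClosed.lift
  set x : Fin n → AlgebraicClosure Fq := fun j => ι (φ (y j)) with hx
  have hmap : M.map ι.toRingHom = Matrix.of (fun k i =>
      MvPolynomial.aeval x (MvPolynomial.pderiv i (f k))) := by
    funext k i
    simp only [Matrix.map_apply, hM, Matrix.of_apply, AlgHom.toRingHom_eq_coe,
      RingHom.coe_coe]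
    rw [MvPolynomial.comp_aeval_apply, MvPolynomial.comp_aeval_apply, hx]
  have hx0 : x ≠ 0 := by
    intro h0
    apply hbi
    have h1 : ι (φ (y i₀)) = 0 := by
      have h2 := congrFun h0 i₀
      rw [hx] at h2
      exact h2
    have h2 : φ (y i₀) = 0 := ι.injective (by rw [map_zero]; exact h1)
    rw [hφmk, AdjoinRoot.mk_eq_zero] at h2
    have h3 : π ∣ y i₀ - (y i₀ - b i₀) := dvd_sub h2 (hyb i₀)
    simpa using h3
  have hfx : ∀ k, MvPolynomial.aeval x (f k) = 0 := by
    intro k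
    have h1 : φ (MvPolynomial.aeval y (f k)) = 0 := by
      rw [hφmk, AdjoinRoot.mk_eq_zero]; exact hfy k
    have h2 : MvPolynomial.aeval x (f k) = ι (φ (MvPolynomial.aeval y (f k))) := by
      rw [MvPolynomial.comp_aeval_apply, MvPolynomial.comp_aeval_apply, hx]
    rw [h2, h1, map_zero]
  have hsurj : Function.Surjective M.mulVec := by
    apply st8_mulVec_surj ι.toRingHom
    rw [hmap]
    exact hJ x hx0 hfx
  -- the bijection with the affine solution set
  have hφp : ∀ p : Polynomial Fq, φ (p %ₘ π) = φ p := by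
    intro p
    have hdecomp := Polynomial.modByMonic_add_div p π
    have h1 : φ (p %ₘ π) + φ (π * (p /ₘ π)) = φ p := by rw [← map_add, hdecomp]
    have hz : φ (π * (p /ₘ π)) = 0 := by
      rw [hφmk, AdjoinRoot.mk_eq_zero]; exact dvd_mul_right _ _
    rw [hz, add_zero] at h1
    exact h1
  have hbij : Function.Bijective
      (fun w : {w : Fin n → Polynomial Fq // (∀ i, (w i).degree < π.degree) ∧
          ∀ k, π ∣ (U k + ∑ i, w i * MvPolynomial.aeval y (MvPolynomial.pderiv i (f k)))} =>
        (⟨fun i => φ (w.1 i), (hcond w.1).1 w.2.2⟩ :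
          {u : Fin n → AdjoinRoot π // M.mulVec u = v})) := by
    constructor
    · rintro ⟨w, hwdeg, hwc⟩ ⟨w', hwdeg', hwc'⟩ hww
      have h1 : ∀ i, φ (w i) = φ (w' i) := by
        intro i
        exact congrFun (congrArg Subtype.val hww) i
      apply Subtype.ext
      funext i
      have h2 : π ∣ (w i - w' i) := by
        rw [← AdjoinRoot.mk_eq_zero (f := π), ← hφmk, map_sub, h1 i, sub_self]
      have h3 : (w i - w' i).degree < π.degree :=
        lt_of_le_of_lt (Polynomial.degree_sub_le _ _) (max_lt (hwdeg i) (hwdeg' i))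
      exact sub_eq_zero.mp (Polynomial.eq_zero_of_dvd_of_degree_lt h2 h3)
    · rintro ⟨u, hu⟩
      choose p hp using fun i => AdjoinRoot.mk_surjective (u i)
      have hφu : (fun i => φ (p i %ₘ π)) = u := by
        funext i
        rw [hφp, hφmk, hp i]
      refine ⟨⟨fun i => p i %ₘ π, ⟨fun i => Polynomial.degree_modByMonic_lt _ hmon, ?_⟩⟩, ?_⟩
      · apply (hcond _).2
        rw [hφu]
        exact hu
      · exact Subtype.ext hφu
  rw [Nat.card_congr (Equiv.ofBijective _ hbij), st8_card_affine M hsurj v,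
    st8_adjoinRoot_card hmon, ← pow_mul, Nat.mul_comm]

/-- eq. (3.?) `N†(π^e) = |π|^{n-R} N†(π^{e-1})`. -/
theorem statement8 (Fq : Type) [Field Fq] [Fintype Fq] (p d n R : ℕ)
    [Fact p.Prime] [CharP Fq p] (hd : 2 ≤ d) (hdp : d < p) (hRn : R ≤ n)
    (f : Fin R → MvPolynomial (Fin n) Fq) (hsm : SmoothCI Fq d f)
    (π : Polynomial Fq) (hmon : π.Monic) (hirr : Irreducible π)
    (μ : ℕ) (hμ : 1 ≤ μ)
    (b : Fin n → Polynomial Fq) (hb : ¬ ∀ i, π ∣ b i)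
    (hfb : ∀ k, π ^ μ ∣ MvPolynomial.aeval b (f k))
    (e : ℕ) (he : 2 ≤ e) (hμe : μ ≤ e - 1) :
    NsolP Fq f (π ^ e) (e * π.natDegree) (fun z => ∀ i, π ^ μ ∣ (z i - b i))
      = Fintype.card Fq ^ ((n - R) * π.natDegree) *
        NsolP Fq f (π ^ (e - 1)) ((e - 1) * π.natDegree)
          (fun z => ∀ i, π ^ μ ∣ (z i - b i)) := by
  classical
  have he1 : (1:ℕ) ≤ e := le_trans one_le_two he
  have hem : e - 1 ≠ 0 := Nat.sub_ne_zero_of_lt (lt_of_lt_of_le one_lt_two he)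
  have hee : e - 1 + 1 = e := Nat.sub_add_cancel he1
  have hele : e - 1 ≤ e := Nat.sub_le e 1
  have hμ0 : μ ≠ 0 := Nat.one_le_iff_ne_zero.mp hμ
  obtain ⟨i₀, hbi⟩ : ∃ i, ¬ π ∣ b i := not_forall.mp hb
  have hπ0 : π ≠ 0 := hmon.ne_zero
  set c := π ^ (e - 1) with hcdef
  have hcmon : c.Monic := hmon.pow _
  have hc0 : c ≠ 0 := hcmon.ne_zero
  have hdegpow : ∀ k : ℕ, (π ^ k).degree = ((k * π.natDegree : ℕ) : WithBot ℕ) := fun k => by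
    rw [Polynomial.degree_eq_natDegree (pow_ne_zero _ hπ0), Polynomial.natDegree_pow]
  have hdegπ : π.degree = (π.natDegree : WithBot ℕ) := Polynomial.degree_eq_natDegree hπ0
  -- the two counting predicates
  set Pprev : (Fin n → Polynomial Fq) → Prop := fun z =>
    (∀ i, (z i).degree < (((e - 1) * π.natDegree : ℕ) : WithBot ℕ)) ∧
      (∀ i, π ^ μ ∣ (z i - b i)) ∧ ∀ k, c ∣ MvPolynomial.aeval z (f k) with hPprev
  set Pcur : (Fin n → Polynomial Fq) → Prop := fun z =>
    (∀ i, (z i).degree < ((e * π.natDegree : ℕ) : WithBot ℕ)) ∧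
      (∀ i, π ^ μ ∣ (z i - b i)) ∧ ∀ k, π ^ e ∣ MvPolynomial.aeval z (f k) with hPcur
  have hNcur : NsolP Fq f (π ^ e) (e * π.natDegree) (fun z => ∀ i, π ^ μ ∣ (z i - b i))
      = Nat.card {z // Pcur z} := rfl
  have hNprev : NsolP Fq f c ((e - 1) * π.natDegree) (fun z => ∀ i, π ^ μ ∣ (z i - b i))
      = Nat.card {z // Pprev z} := rfl
  -- the key linearisation equivalence
  have hkey : ∀ y w : Fin n → Polynomial Fq, (∀ k, c ∣ MvPolynomial.aeval y (f k)) → ∀ k,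
      (π ^ e ∣ MvPolynomial.aeval (fun i => y i + c * w i) (f k) ↔
        π ∣ ((MvPolynomial.aeval y (f k) /ₘ c)
          + ∑ i, w i * MvPolynomial.aeval y (MvPolynomial.pderiv i (f k)))) := by
    intro y w hy k
    obtain ⟨T, hT⟩ := st8_mv_taylor c y w (f k)
    have hT' : MvPolynomial.aeval (fun i => y i + c * w i) (f k)
        - MvPolynomial.aeval y (f k)
        - c * ∑ i, w i * MvPolynomial.aeval y (MvPolynomial.pderiv i (f k)) = c ^ 2 * T := hT
    have hUk : MvPolynomial.aeval y (f k) = c * (MvPolynomial.aeval y (f k) /ₘ c) := by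
      have h0 : MvPolynomial.aeval y (f k) %ₘ c = 0 :=
        (Polynomial.modByMonic_eq_zero_iff_dvd hcmon).2 (hy k)
      conv_lhs => rw [← Polynomial.modByMonic_add_div (MvPolynomial.aeval y (f k)) c]
      rw [h0, zero_add]
    have hz : MvPolynomial.aeval (fun i => y i + c * w i) (f k)
        = c * ((MvPolynomial.aeval y (f k) /ₘ c)
            + ∑ i, w i * MvPolynomial.aeval y (MvPolynomial.pderiv i (f k)) + c * T) := by
      linear_combination hT' + hUk
    have hπc : π ∣ c * T :=
      Dvd.dvd.mul_right (by rw [hcdef]; exact dvd_pow_self π hem) T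
    rw [hz, show π ^ e = c * π from by rw [hcdef, ← pow_succ, hee],
      mul_dvd_mul_iff_left hc0]
    constructor
    · intro h
      have h2 := dvd_sub h hπc
      simpa using h2
    · intro h
      exact dvd_add h hπc
  -- degree bookkeeping
  have hdegc : c.degree = (((e - 1) * π.natDegree : ℕ) : WithBot ℕ) := hdegpow (e - 1)
  have hdlt : ∀ w : Polynomial Fq, w.degree < π.degree →
      (c * w).degree < ((e * π.natDegree : ℕ) : WithBot ℕ) := by
    intro w hw
    rcases eq_or_ne w 0 with rfl | hw0
    · rw [mul_zero, Polynomial.degree_zero]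
      exact WithBot.bot_lt_coe _
    · rw [Polynomial.degree_mul, hdegc, Polynomial.degree_eq_natDegree hw0]
      rw [Polynomial.degree_eq_natDegree hw0, hdegπ, Nat.cast_lt] at hw
      rw [← Nat.cast_add, Nat.cast_lt]
      have hD1 : 1 ≤ π.natDegree := hirr.natDegree_pos
      calc (e - 1) * π.natDegree + w.natDegree < (e - 1) * π.natDegree + π.natDegree :=
            Nat.add_lt_add_left hw _
        _ = ((e - 1) + 1) * π.natDegree := by ring
        _ = e * π.natDegree := by rw [hee]
  have hcast_le : (((e - 1) * π.natDegree : ℕ) : WithBot ℕ) ≤ ((e * π.natDegree : ℕ) : WithBot ℕ) := by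
    rw [Nat.cast_le]
    exact Nat.mul_le_mul_right _ hele
  -- decomposition of a solution mod `π^e`
  have hzyw : ∀ (z : Fin n → Polynomial Fq) (i : Fin n),
      z i = (z i %ₘ c) + c * (z i /ₘ c) := fun z i =>
    (Polynomial.modByMonic_add_div (z i) c).symm
  have hdegw : ∀ (z : Fin n → Polynomial Fq), (∀ i, (z i).degree < ((e * π.natDegree : ℕ) : WithBot ℕ)) →
      ∀ i, (z i /ₘ c).degree < π.degree := by
    intro z hz i
    rcases eq_or_ne (z i /ₘ c) 0 with h0 | h0
    · rw [h0, Polynomial.degree_zero, hdegπ]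
      exact WithBot.bot_lt_coe _
    · have hcw : c * (z i /ₘ c) = z i - (z i %ₘ c) := by linear_combination -(hzyw z i)
      have hlt : (c * (z i /ₘ c)).degree < ((e * π.natDegree : ℕ) : WithBot ℕ) := by
        rw [hcw]
        refine lt_of_le_of_lt (Polynomial.degree_sub_le _ _) (max_lt (hz i) ?_)
        exact lt_of_lt_of_le (hdegc ▸ Polynomial.degree_modByMonic_lt (z i) hcmon) hcast_le
      rw [Polynomial.degree_mul, hdegc, Polynomial.degree_eq_natDegree h0, ← Nat.cast_add,
        Nat.cast_lt] at hlt
      rw [Polynomial.degree_eq_natDegree h0, hdegπ, Nat.cast_lt]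
      have heq : (e - 1) * π.natDegree + π.natDegree = e * π.natDegree := by
        calc (e - 1) * π.natDegree + π.natDegree = ((e - 1) + 1) * π.natDegree := by ring
          _ = e * π.natDegree := by rw [hee]
      rw [← heq] at hlt
      exact Nat.lt_of_add_lt_add_left hlt
  have hπμc : π ^ μ ∣ c := by rw [hcdef]; exact pow_dvd_pow π hμe
  have hπ1c : π ∣ c := by
    rw [hcdef]; exact dvd_pow_self π hem
  have hcec : c ∣ π ^ e := by rw [hcdef]; exact pow_dvd_pow π hele
  -- recombination map
  have hg : ∀ (y : {y // Pprev y}) (w : {w : Fin n → Polynomial Fq //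
      (∀ i, (w i).degree < π.degree) ∧ ∀ k, π ∣ ((MvPolynomial.aeval y.1 (f k) /ₘ c)
        + ∑ i, w i * MvPolynomial.aeval y.1 (MvPolynomial.pderiv i (f k)))}),
      Pcur (fun i => y.1 i + c * w.1 i) := by
    rintro ⟨y, hy⟩ ⟨w, hw⟩
    refine ⟨?_, ?_, ?_⟩
    · intro i
      refine lt_of_le_of_lt (Polynomial.degree_add_le _ _) (max_lt ?_ ?_)
      · exact lt_of_lt_of_le (hy.1 i) hcast_le
      · exact hdlt (w i) (hw.1 i)
    · intro i
      have h1 : (y i + c * w i) - b i = (y i - b i) + c * w i := by ring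
      rw [h1]
      exact dvd_add (hy.2.1 i) (Dvd.dvd.mul_right hπμc (w i))
    · exact fun k => (hkey y w hy.2.2 k).2 (hw.2 k)
  let g : (Σ y : {y // Pprev y}, {w : Fin n → Polynomial Fq //
      (∀ i, (w i).degree < π.degree) ∧ ∀ k, π ∣ ((MvPolynomial.aeval y.1 (f k) /ₘ c)
        + ∑ i, w i * MvPolynomial.aeval y.1 (MvPolynomial.pderiv i (f k)))}) →
      {z // Pcur z} :=
    fun yw => ⟨fun i => yw.1.1 i + c * yw.2.1 i, hg yw.1 yw.2⟩
  have hbij : Function.Bijective g := by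
    constructor
    · rintro ⟨⟨y, hy⟩, ⟨w, hw⟩⟩ ⟨⟨y', hy'⟩, ⟨w', hw'⟩⟩ hzz
      have h1 : ∀ i, y i + c * w i = y' i + c * w' i := fun i =>
        congrFun (congrArg Subtype.val hzz) i
      have hyy : y = y' := by
        funext i
        have hdvd : c ∣ y i - y' i := ⟨w' i - w i, by linear_combination (h1 i)⟩
        have hdeg : (y i - y' i).degree < c.degree := by
          rw [hdegc]
          exact lt_of_le_of_lt (Polynomial.degree_sub_le _ _) (max_lt (hy.1 i) (hy'.1 i))
        exact sub_eq_zero.mp (Polynomial.eq_zero_of_dvd_of_degree_lt hdvd hdeg)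
      subst hyy
      have hww : w = w' := by
        funext i
        exact mul_left_cancel₀ hc0 (by linear_combination (h1 i))
      subst hww
      rfl
    · rintro ⟨z, hz⟩
      have hdegy : ∀ i, (z i %ₘ c).degree < (((e - 1) * π.natDegree : ℕ) : WithBot ℕ) :=
        fun i => hdegc ▸ Polynomial.degree_modByMonic_lt (z i) hcmon
      have hyb : ∀ i, π ^ μ ∣ (z i %ₘ c) - b i := by
        intro i
        have h1 : (z i %ₘ c) - b i = (z i - b i) - c * (z i /ₘ c) := by
          linear_combination -(hzyw z i)
        rw [h1]
        exact dvd_sub (hz.2.1 i) (Dvd.dvd.mul_right hπμc _)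
      have hfy : ∀ k, c ∣ MvPolynomial.aeval (fun i => z i %ₘ c) (f k) := by
        intro k
        have h1 : c ∣ MvPolynomial.aeval (fun i => z i %ₘ c) (f k)
            - MvPolynomial.aeval z (f k) :=
          st8_aeval_dvd_sub c _ z
            (fun i => ⟨-(z i /ₘ c), by linear_combination -(hzyw z i)⟩) (f k)
        have h2 : c ∣ MvPolynomial.aeval z (f k) := dvd_trans hcec (hz.2.2 k)
        have h3 := dvd_add h1 h2
        simpa using h3
      have hfun : (fun i => (z i %ₘ c) + c * (z i /ₘ c)) = z :=
        funext fun i => (hzyw z i).symm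
      have hcondw : ∀ k, π ∣ ((MvPolynomial.aeval (fun i => z i %ₘ c) (f k) /ₘ c)
          + ∑ i, (z i /ₘ c) * MvPolynomial.aeval (fun i => z i %ₘ c)
              (MvPolynomial.pderiv i (f k))) := by
        intro k
        refine (hkey _ _ hfy k).1 ?_
        rw [hfun]
        exact hz.2.2 k
      exact ⟨⟨⟨fun i => z i %ₘ c, hdegy, hyb, hfy⟩, ⟨fun i => z i /ₘ c,
        fun i => hdegw z hz.1 i, hcondw⟩⟩, Subtype.ext hfun⟩
  -- finiteness and counting
  haveI hfin1 : Finite {y // Pprev y} := st8_finite Pprev (fun z hz => hz.1)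
  haveI hfin2 : ∀ y : {y // Pprev y}, Finite {w : Fin n → Polynomial Fq //
      (∀ i, (w i).degree < π.degree) ∧ ∀ k, π ∣ ((MvPolynomial.aeval y.1 (f k) /ₘ c)
        + ∑ i, w i * MvPolynomial.aeval y.1 (MvPolynomial.pderiv i (f k)))} := by
    intro y
    apply st8_finite (D := π.natDegree)
    intro w hw i
    rw [← hdegπ]
    exact hw.1 i
  letI : Fintype {y // Pprev y} := Fintype.ofFinite _
  letI : ∀ y : {y // Pprev y}, Fintype {w : Fin n → Polynomial Fq //
      (∀ i, (w i).degree < π.degree) ∧ ∀ k, π ∣ ((MvPolynomial.aeval y.1 (f k) /ₘ c)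
        + ∑ i, w i * MvPolynomial.aeval y.1 (MvPolynomial.pderiv i (f k)))} :=
    fun y => Fintype.ofFinite _
  have hfib : ∀ y : {y // Pprev y}, Fintype.card {w : Fin n → Polynomial Fq //
      (∀ i, (w i).degree < π.degree) ∧ ∀ k, π ∣ ((MvPolynomial.aeval y.1 (f k) /ₘ c)
        + ∑ i, w i * MvPolynomial.aeval y.1 (MvPolynomial.pderiv i (f k)))}
      = Fintype.card Fq ^ ((n - R) * π.natDegree) := by
    intro y
    rw [← Nat.card_eq_fintype_card]
    exact st8_fiber_count Fq f hsm.2.2 π hmon hirr y.1 b i₀ hbi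
      (fun i => dvd_trans (dvd_pow_self π hμ0) (y.2.2.1 i))
      (fun k => dvd_trans hπ1c (y.2.2.2 k))
      (fun k => MvPolynomial.aeval y.1 (f k) /ₘ c)
  have hcount : Nat.card {z // Pcur z}
      = Nat.card {y // Pprev y} * Fintype.card Fq ^ ((n - R) * π.natDegree) := by
    rw [← Nat.card_congr (Equiv.ofBijective g hbij), Nat.card_eq_fintype_card,
      Fintype.card_sigma, Finset.sum_congr rfl (fun y _ => hfib y), Finset.sum_const,
      Finset.card_univ, smul_eq_mul, Nat.card_eq_fintype_card]
  rw [hNcur, hNprev, hcount, Nat.mul_comm]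
end
end

section
/- Let d ≥ 2, n ≥ dR, and let f_1,…,f_R be degree-d forms over 𝔽_q cutting out a smooth complete intersection in ℙ^{n−1}, with char(𝔽_q) > d. For an integer S, let m(S) denote the measure of the set of v ∈ 𝕋^n such that |f_i(v)| < q^{−S} for 1 ≤ i ≤ R. Then m(S) = 1 if S < d, and m(S) = q^{(d−1−S)n}·N(t^{S+1−d}) if S ≥ d, where N(t^j) = #{u ∈ 𝔽_q[τ]^n : |u| < q^j, f_i(u) ≡ 0 mod τ^j for all i}. -/
open scoped Classical NNReal
open Polynomial MeasureTheory

noncomputable section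

set_option linter.unusedSectionVars false
set_option maxHeartbeats 800000
namespace St11
variable (Fq : Type) [Field Fq] [Fintype Fq]

/-- embedding of the abstract polynomial ring (in τ) into Laurent series -/
def iot : Polynomial Fq →+* LaurentSeries Fq :=
  (HahnSeries.ofPowerSeries ℤ Fq).comp Polynomial.coeToPowerSeries.ringHom

def I (m : ℤ) : Set (LaurentSeries Fq) := {α | α = 0 ∨ m ≤ α.order}

variable {Fq}

lemma zero_mem_I (m : ℤ) : (0 : LaurentSeries Fq) ∈ I Fq m := Or.inl rfl

lemma coeff_eq_zero_of_mem_I {m : ℤ} {α : LaurentSeries Fq} (h : α ∈ I Fq m)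
    {k : ℤ} (hk : k < m) : α.coeff k = 0 := by
  rcases h with h | h
  · simp [h]
  · exact HahnSeries.coeff_eq_zero_of_lt_order (lt_of_lt_of_le hk h)

lemma mem_I_of_coeff {m : ℤ} {α : LaurentSeries Fq} (h : ∀ k < m, α.coeff k = 0) :
    α ∈ I Fq m := by
  by_cases h0 : α = 0
  · exact Or.inl h0
  · refine Or.inr ?_
    by_contra hlt
    exact (HahnSeries.coeff_order_eq_zero.not.mpr h0) (h _ (not_le.mp hlt))

lemma mem_I_iff_coeff {m : ℤ} {α : LaurentSeries Fq} :
    α ∈ I Fq m ↔ ∀ k < m, α.coeff k = 0 :=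
  ⟨fun h _ hk => coeff_eq_zero_of_mem_I h hk, mem_I_of_coeff⟩

lemma I_mono {m m' : ℤ} (h : m' ≤ m) : I Fq m ⊆ I Fq m' := by
  intro α hα
  exact mem_I_of_coeff fun k hk => coeff_eq_zero_of_mem_I hα (lt_of_lt_of_le hk h)

lemma add_mem_I {m : ℤ} {α β : LaurentSeries Fq} (hα : α ∈ I Fq m) (hβ : β ∈ I Fq m) :
    α + β ∈ I Fq m := by
  refine mem_I_of_coeff fun k hk => ?_
  rw [HahnSeries.coeff_add, coeff_eq_zero_of_mem_I hα hk, coeff_eq_zero_of_mem_I hβ hk, add_zero]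

lemma neg_mem_I {m : ℤ} {α : LaurentSeries Fq} (hα : α ∈ I Fq m) : -α ∈ I Fq m := by
  refine mem_I_of_coeff fun k hk => ?_
  rw [HahnSeries.coeff_neg, coeff_eq_zero_of_mem_I hα hk, neg_zero]

lemma sub_mem_I {m : ℤ} {α β : LaurentSeries Fq} (hα : α ∈ I Fq m) (hβ : β ∈ I Fq m) :
    α - β ∈ I Fq m := by
  rw [sub_eq_add_neg]; exact add_mem_I hα (neg_mem_I hβ)

lemma mul_mem_I {s t : ℤ} {α β : LaurentSeries Fq} (hα : α ∈ I Fq s) (hβ : β ∈ I Fq t) :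
    α * β ∈ I Fq (s + t) := by
  rcases hα with h | h; · simp [h, zero_mem_I]
  rcases hβ with h' | h'; · simp [h', zero_mem_I]
  by_cases h0 : α = 0; · simp [h0, zero_mem_I]
  by_cases h0' : β = 0; · simp [h0', zero_mem_I]
  refine Or.inr ?_
  rw [HahnSeries.order_mul h0 h0']
  exact add_le_add h h'

lemma sum_mem_I {m : ℤ} {ι : Type*} (s : Finset ι) (F : ι → LaurentSeries Fq)
    (h : ∀ i ∈ s, F i ∈ I Fq m) : ∑ i ∈ s, F i ∈ I Fq m := by
  classical
  induction s using Finset.induction_on with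
  | empty => simpa using zero_mem_I m
  | @insert a s' hx ih =>
    rw [Finset.sum_insert hx]
    exact add_mem_I (h a (Finset.mem_insert_self a s'))
      (ih fun i hi => h i (Finset.mem_insert_of_mem hi))

lemma C_mem_I0 (c : Fq) : (HahnSeries.C c : LaurentSeries Fq) ∈ I Fq 0 := by
  refine mem_I_of_coeff fun k hk => ?_
  rw [HahnSeries.C_apply, HahnSeries.coeff_single]
  simp [show k ≠ 0 from ne_of_lt hk]


lemma one_lt_q : (1 : ℝ≥0) < (Fintype.card Fq : ℝ≥0) := by
  exact_mod_cast Fintype.one_lt_card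

lemma absK_lt_iff (α : LaurentSeries Fq) (S : ℤ) :
    absK Fq α < (Fintype.card Fq : ℝ≥0) ^ (-S) ↔ α ∈ I Fq (S + 1) := by
  unfold absK
  by_cases h0 : α = 0
  · simp only [h0, if_pos rfl]
    constructor
    · intro _; exact zero_mem_I _
    · intro _
      exact zpow_pos (lt_trans one_pos (one_lt_q (Fq := Fq))) _
  · rw [if_neg h0]
    rw [zpow_lt_zpow_iff_right₀ (one_lt_q (Fq := Fq))]
    constructor
    · intro h
      refine Or.inr ?_
      omega
    · intro h
      rcases h with h | h
      · exact absurd h h0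
      · omega

lemma absK_lt_one_iff (α : LaurentSeries Fq) :
    absK Fq α < 1 ↔ α ∈ I Fq 1 := by
  have h := absK_lt_iff α 0
  simpa using h

lemma coeff_iot (g : Polynomial Fq) (k : ℤ) :
    (iot Fq g).coeff k = if k < 0 then 0 else g.coeff k.natAbs := by
  show ((HahnSeries.ofPowerSeries ℤ Fq) (g : PowerSeries Fq)).coeff k = _
  rw [PowerSeries.coeff_coe]
  simp [Polynomial.coeff_coe]

lemma iot_mem_I_iff (g : Polynomial Fq) (m : ℕ) :
    iot Fq g ∈ I Fq m ↔ (X : Polynomial Fq) ^ m ∣ g := by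
  rw [mem_I_iff_coeff, Polynomial.X_pow_dvd_iff]
  constructor
  · intro h d hd
    have := h (d : ℤ) (by exact_mod_cast hd)
    rwa [coeff_iot, if_neg (by omega), Int.natAbs_natCast] at this
  · intro h k hk
    rw [coeff_iot]
    split_ifs with h'
    · rfl
    · exact h _ (by omega)

lemma iot_mem_I1 (g : Polynomial Fq) : iot Fq (X * g) ∈ I Fq 1 := by
  have : iot Fq (X * g) ∈ I Fq (1 : ℕ) := by
    rw [iot_mem_I_iff]
    exact Dvd.intro g (by ring)
  simpa using this


lemma one_mem_I0 : (1 : LaurentSeries Fq) ∈ I Fq 0 :=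
  Or.inr (le_of_eq HahnSeries.order_one.symm)

lemma mul_sub_mem {j s t : ℤ} {a a' b b' : LaurentSeries Fq}
    (ha : a ∈ I Fq s) (hb' : b' ∈ I Fq t) (hab : a - a' ∈ I Fq (s + j))
    (hcd : b - b' ∈ I Fq (t + j)) : a * b - a' * b' ∈ I Fq (s + t + j) := by
  have h1 : a * (b - b') ∈ I Fq (s + (t + j)) := mul_mem_I ha hcd
  have h2 : (a - a') * b' ∈ I Fq (s + j + t) := mul_mem_I hab hb'
  have e1 : s + (t + j) = s + t + j := by ring
  have e2 : s + j + t = s + t + j := by ring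
  rw [e1] at h1; rw [e2] at h2
  have e3 : a * b - a' * b' = a * (b - b') + (a - a') * b' := by ring
  rw [e3]
  exact add_mem_I h1 h2

lemma pow_sub_mem {j : ℤ} {a b : LaurentSeries Fq} (ha : a ∈ I Fq 1) (hb : b ∈ I Fq 1)
    (hab : a - b ∈ I Fq (1 + j)) (k : ℕ) :
    a ^ k ∈ I Fq k ∧ b ^ k ∈ I Fq k ∧ a ^ k - b ^ k ∈ I Fq (k + j) := by
  induction k with
  | zero =>
    refine ⟨by simpa using one_mem_I0, by simpa using one_mem_I0, ?_⟩
    simpa using zero_mem_I j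
  | succ k ih =>
    have h1 : a ^ (k + 1) ∈ I Fq ((k : ℤ) + 1) := by
      rw [pow_succ]
      exact mul_mem_I ih.1 ha
    have h2 : b ^ (k + 1) ∈ I Fq ((k : ℤ) + 1) := by
      rw [pow_succ]
      exact mul_mem_I ih.2.1 hb
    have h3 : a ^ (k + 1) - b ^ (k + 1) ∈ I Fq ((k : ℤ) + 1 + j) := by
      rw [pow_succ, pow_succ]
      exact mul_sub_mem ih.1 hb ih.2.2 hab
    have e : ((k + 1 : ℕ) : ℤ) = (k : ℤ) + 1 := by push_cast; ring
    simp only [e]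
    exact ⟨h1, h2, h3⟩

lemma prod_sub_mem {j : ℤ} {n : ℕ} (u v : Fin n → LaurentSeries Fq)
    (hu : ∀ i, u i ∈ I Fq 1) (hv : ∀ i, v i ∈ I Fq 1)
    (huv : ∀ i, u i - v i ∈ I Fq (1 + j)) (m : Fin n → ℕ) (s : Finset (Fin n)) :
    (∏ i ∈ s, u i ^ m i) ∈ I Fq (∑ i ∈ s, (m i : ℤ)) ∧
    (∏ i ∈ s, v i ^ m i) ∈ I Fq (∑ i ∈ s, (m i : ℤ)) ∧
    (∏ i ∈ s, u i ^ m i) - (∏ i ∈ s, v i ^ m i) ∈ I Fq ((∑ i ∈ s, (m i : ℤ)) + j) := by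
  classical
  induction s using Finset.induction_on with
  | empty =>
    refine ⟨by simpa using one_mem_I0, by simpa using one_mem_I0, ?_⟩
    simpa using zero_mem_I j
  | @insert a s' hx ih =>
    rw [Finset.prod_insert hx, Finset.prod_insert hx, Finset.sum_insert hx]
    obtain ⟨hpa, hpb, hpab⟩ := pow_sub_mem (hu a) (hv a) (huv a) (m a)
    refine ⟨mul_mem_I hpa ih.1, mul_mem_I hpb ih.2.1, ?_⟩
    have := mul_sub_mem hpa ih.2.1 hpab ih.2.2
    convert this using 2

lemma homog_deg_sum {d n : ℕ} {F : MvPolynomial (Fin n) Fq} (hF : F.IsHomogeneous d)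
    {m : Fin n →₀ ℕ} (hm : m ∈ F.support) : ∑ i, m i = d := by
  have h1 := hF (MvPolynomial.mem_support_iff.mp hm)
  rw [show (Finsupp.weight (1 : Fin n → ℕ)) = Finsupp.degree from
    Finsupp.degree_eq_weight_one.symm] at h1
  rw [← h1, Finsupp.degree_apply]
  exact (Finset.sum_subset (Finset.subset_univ _)
    (fun i _ hi => Finsupp.notMem_support_iff.mp hi)).symm

lemma eval_mem_and_sub_mem {j : ℤ} {d n : ℕ} {F : MvPolynomial (Fin n) Fq}
    (hF : F.IsHomogeneous d) (u v : Fin n → LaurentSeries Fq)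
    (hu : ∀ i, u i ∈ I Fq 1) (hv : ∀ i, v i ∈ I Fq 1)
    (huv : ∀ i, u i - v i ∈ I Fq (1 + j)) :
    MvPolynomial.eval₂ HahnSeries.C u F ∈ I Fq d ∧
    MvPolynomial.eval₂ HahnSeries.C u F - MvPolynomial.eval₂ HahnSeries.C v F
      ∈ I Fq (d + j) := by
  rw [MvPolynomial.eval₂_eq', MvPolynomial.eval₂_eq']
  constructor
  · apply sum_mem_I
    intro m hm
    have hdeg : (∑ i, ((m i : ℤ))) = (d : ℤ) := by
      exact_mod_cast congrArg (Nat.cast : ℕ → ℤ) (homog_deg_sum hF hm)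
    have hp := (prod_sub_mem u v hu hv huv m Finset.univ).1
    rw [hdeg] at hp
    have := mul_mem_I (C_mem_I0 (F.coeff m)) hp
    simpa using this
  · rw [← Finset.sum_sub_distrib]
    apply sum_mem_I
    intro m hm
    have hdeg : (∑ i, ((m i : ℤ))) = (d : ℤ) := by
      exact_mod_cast congrArg (Nat.cast : ℕ → ℤ) (homog_deg_sum hF hm)
    have hp := (prod_sub_mem u v hu hv huv m Finset.univ).2.2
    rw [hdeg] at hp
    have e : HahnSeries.C (F.coeff m) * ∏ i, u i ^ m i
        - HahnSeries.C (F.coeff m) * ∏ i, v i ^ m i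
        = HahnSeries.C (F.coeff m) * ((∏ i, u i ^ m i) - ∏ i, v i ^ m i) := by ring
    rw [e]
    have := mul_mem_I (C_mem_I0 (F.coeff m)) hp
    simpa using this

lemma aeval_X_mul {d n : ℕ} {F : MvPolynomial (Fin n) Fq} (hF : F.IsHomogeneous d)
    (z : Fin n → Polynomial Fq) :
    MvPolynomial.aeval (fun i => (X : Polynomial Fq) * z i) F
      = X ^ d * MvPolynomial.aeval z F := by
  rw [MvPolynomial.aeval_def, MvPolynomial.aeval_def, MvPolynomial.eval₂_eq',
    MvPolynomial.eval₂_eq', Finset.mul_sum]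
  apply Finset.sum_congr rfl
  intro m hm
  have hdeg := homog_deg_sum hF hm
  rw [← hdeg]
  simp only [mul_pow, Finset.prod_mul_distrib, Finset.prod_pow_eq_pow_sum]
  ring

lemma iot_eval {n : ℕ} (z : Fin n → Polynomial Fq) (F : MvPolynomial (Fin n) Fq) :
    iot Fq (MvPolynomial.aeval z F)
      = MvPolynomial.eval₂ HahnSeries.C (fun i => iot Fq (z i)) F := by
  rw [MvPolynomial.aeval_def, MvPolynomial.eval₂_comp_left (iot Fq)]
  have h : (iot Fq).comp (algebraMap Fq (Polynomial Fq))
      = (HahnSeries.C : Fq →+* LaurentSeries Fq) := by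
    apply RingHom.ext
    intro a
    show (HahnSeries.ofPowerSeries ℤ Fq) ((Polynomial.C a : Polynomial Fq) : PowerSeries Fq) = _
    rw [Polynomial.coe_C, HahnSeries.ofPowerSeries_C]
  rw [h]
  rfl

lemma polyOf_coeff {P : ℕ} (v : Fin P → Fq) (m : ℕ) :
    (polyOf Fq v).coeff m = if h : m < P then v ⟨m, h⟩ else 0 := by
  unfold polyOf
  rw [Polynomial.finset_sum_coeff]
  simp only [Polynomial.coeff_C_mul, Polynomial.coeff_X_pow, mul_ite, mul_one, mul_zero]
  split_ifs with h
  · rw [Finset.sum_eq_single (⟨m, h⟩ : Fin P)]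
    · simp
    · intro b _ hb
      rw [if_neg]
      intro he
      exact hb (by ext; simpa using he.symm)
    · intro hmem
      exact absurd (Finset.mem_univ _) hmem
  · apply Finset.sum_eq_zero
    intro b _
    rw [if_neg]
    intro he
    exact h (he ▸ b.isLt)

lemma polyOf_degree_lt {P : ℕ} (v : Fin P → Fq) :
    (polyOf Fq v).degree < (P : WithBot ℕ) := by
  rw [Polynomial.degree_lt_iff_coeff_zero]
  intro m hm
  rw [polyOf_coeff, dif_neg]
  exact fun h => absurd hm (by exact_mod_cast not_le.mpr h)

lemma polyOf_of_coeff {P : ℕ} (z : Polynomial Fq) (hz : z.degree < (P : WithBot ℕ)) :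
    polyOf Fq (fun m : Fin P => z.coeff m) = z := by
  ext m
  rw [polyOf_coeff]
  split_ifs with h
  · rfl
  · exact ((Polynomial.degree_lt_iff_coeff_zero _ _).mp hz m
      (by exact_mod_cast not_lt.mp h)).symm

variable {n : ℕ}

/-- center of the box indexed by `w` -/
def ctr {j : ℕ} (w : Fin n → Fin j → Fq) : Fin n → LaurentSeries Fq :=
  fun i => iot Fq ((X : Polynomial Fq) * polyOf Fq (w i))

/-- the box indexed by `w` -/
def box (j : ℕ) (w : Fin n → Fin j → Fq) : Set (Fin n → LaurentSeries Fq) :=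
  {v | ∀ i, v i - ctr w i ∈ I Fq ((j : ℤ) + 1)}

lemma ctr_mem_I1 {j : ℕ} (w : Fin n → Fin j → Fq) (i : Fin n) : ctr w i ∈ I Fq 1 :=
  iot_mem_I1 _

lemma mem_I1_of_mem_box {j : ℕ} {w : Fin n → Fin j → Fq} {v : Fin n → LaurentSeries Fq}
    (hv : v ∈ box j w) (i : Fin n) : v i ∈ I Fq 1 := by
  have h1 : v i - ctr w i ∈ I Fq 1 := I_mono (by omega) (hv i)
  have := add_mem_I h1 (ctr_mem_I1 w i)
  simpa using this

lemma coeff_ctr {j : ℕ} (w : Fin n → Fin j → Fq) (i : Fin n) (m : Fin j) :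
    (ctr w i).coeff ((m : ℤ) + 1) = w i m := by
  unfold ctr
  rw [coeff_iot, if_neg (by omega)]
  have h1 : ((m : ℤ) + 1).natAbs = (m : ℕ) + 1 := by omega
  rw [h1, Polynomial.coeff_X_mul, polyOf_coeff, dif_pos m.isLt]

lemma coeff_eq_of_mem_box {j : ℕ} {w : Fin n → Fin j → Fq} {v : Fin n → LaurentSeries Fq}
    (hv : v ∈ box j w) (i : Fin n) (m : Fin j) :
    (v i).coeff ((m : ℤ) + 1) = w i m := by
  have h1 := coeff_eq_zero_of_mem_I (hv i) (k := (m : ℤ) + 1) (by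
    have := m.isLt; omega)
  rw [HahnSeries.coeff_sub] at h1
  have h2 : (v i).coeff ((m : ℤ) + 1) = (ctr w i).coeff ((m : ℤ) + 1) := by
    have := sub_eq_zero.mp h1; exact this
  rw [h2, coeff_ctr]

lemma box_disjoint {j : ℕ} {w w' : Fin n → Fin j → Fq} {v : Fin n → LaurentSeries Fq}
    (hv : v ∈ box j w) (hv' : v ∈ box j w') : w = w' := by
  funext i m
  rw [← coeff_eq_of_mem_box hv i m, ← coeff_eq_of_mem_box hv' i m]

/-- the index of the box containing `v` -/
def wOf (j : ℕ) (v : Fin n → LaurentSeries Fq) : Fin n → Fin j → Fq :=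
  fun i m => (v i).coeff ((m : ℤ) + 1)

lemma mem_box_wOf {j : ℕ} {v : Fin n → LaurentSeries Fq} (hv : ∀ i, v i ∈ I Fq 1) :
    v ∈ box j (wOf j v) := by
  intro i
  apply mem_I_of_coeff
  intro k hk
  rw [HahnSeries.coeff_sub]
  by_cases h0 : k < 1
  · rw [coeff_eq_zero_of_mem_I (hv i) h0,
      coeff_eq_zero_of_mem_I (ctr_mem_I1 (wOf j v) i) h0, sub_zero]
  · have hm : (k - 1).toNat < j := by omega
    have he : ((⟨(k - 1).toNat, hm⟩ : Fin j) : ℤ) + 1 = k := by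
      simp only []
      omega
    have := coeff_ctr (wOf j v) i ⟨(k - 1).toNat, hm⟩
    rw [he] at this
    rw [this]
    show (v i).coeff k - (v i).coeff _ = 0
    rw [he, sub_self]

lemma eval_lt_of_TT {d : ℕ} {S : ℤ} (hS : S < (d : ℤ)) {F : MvPolynomial (Fin n) Fq}
    (hF : F.IsHomogeneous d) {v : Fin n → LaurentSeries Fq} (hv : ∀ i, v i ∈ I Fq 1) :
    absK Fq (MvPolynomial.eval₂ HahnSeries.C v F) < (Fintype.card Fq : ℝ≥0) ^ (-S) := by
  rw [absK_lt_iff]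
  have h := (eval_mem_and_sub_mem (j := 0) hF v v hv hv
    (fun i => by simpa using zero_mem_I (Fq := Fq) 1)).1
  exact I_mono (by omega) h

lemma box_cond_iff {d : ℕ} {S : ℤ} (hS : (d : ℤ) ≤ S) {j : ℕ} (hj : (j : ℤ) = S + 1 - d)
    {F : MvPolynomial (Fin n) Fq} (hF : F.IsHomogeneous d)
    {w : Fin n → Fin j → Fq} {v : Fin n → LaurentSeries Fq} (hv : v ∈ box j w) :
    (absK Fq (MvPolynomial.eval₂ HahnSeries.C v F) < (Fintype.card Fq : ℝ≥0) ^ (-S)) ↔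
    (X : Polynomial Fq) ^ j ∣ MvPolynomial.aeval (fun i => polyOf Fq (w i)) F := by
  rw [absK_lt_iff]
  have hu : ∀ i, ctr w i ∈ I Fq 1 := ctr_mem_I1 w
  have hvI : ∀ i, v i ∈ I Fq 1 := mem_I1_of_mem_box hv
  have huv : ∀ i, v i - ctr w i ∈ I Fq (1 + (j : ℤ)) := by
    intro i
    have := hv i
    rwa [add_comm (j : ℤ) 1] at this
  have hsub := (eval_mem_and_sub_mem hF v (ctr w) hvI hu huv).2
  have hd : (d : ℤ) + j = S + 1 := by omega
  rw [hd] at hsub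
  have key : MvPolynomial.eval₂ HahnSeries.C v F ∈ I Fq (S + 1) ↔
      MvPolynomial.eval₂ HahnSeries.C (ctr w) F ∈ I Fq (S + 1) := by
    constructor
    · intro h
      have := sub_mem_I h hsub
      simpa using this
    · intro h
      have := add_mem_I hsub h
      simpa using this
  rw [key]
  have he : MvPolynomial.eval₂ HahnSeries.C (ctr w) F
      = iot Fq ((X : Polynomial Fq) ^ d
          * MvPolynomial.aeval (fun i => polyOf Fq (w i)) F) := by
    rw [← aeval_X_mul hF, iot_eval]
    rfl
  rw [he]
  have hSn : S + 1 = ((d + j : ℕ) : ℤ) := by omega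
  rw [hSn, iot_mem_I_iff, pow_add]
  exact mul_dvd_mul_iff_left (pow_ne_zero d Polynomial.X_ne_zero)

lemma box_eq_hbox (j : ℕ) (w : Fin n → Fin j → Fq) :
    box j w = {v : Fin n → LaurentSeries Fq |
      ∀ i, absK Fq (v i - ctr w i) < (Fintype.card Fq : ℝ≥0) ^ (-(j : ℤ))} :=
  Set.ext fun v => forall_congr' fun i => (absK_lt_iff _ _).symm

lemma TTn_eq_iUnion_box (j : ℕ) :
    TTn Fq n = ⋃ w : Fin n → Fin j → Fq, box j w := by
  ext v
  constructor
  · intro hv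
    exact Set.mem_iUnion.mpr ⟨wOf j v, mem_box_wOf (fun i => (absK_lt_one_iff _).mp (hv i))⟩
  · intro hv
    obtain ⟨w, hw⟩ := Set.mem_iUnion.mp hv
    exact fun i => (absK_lt_one_iff _).mpr (mem_I1_of_mem_box hw i)

lemma ctr_zero (j : ℕ) : ctr (fun (_ : Fin n) (_ : Fin j) => (0 : Fq)) = 0 := by
  funext i
  unfold ctr
  have h : polyOf Fq (fun _ : Fin j => (0 : Fq)) = 0 := by
    ext m
    rw [polyOf_coeff]
    split_ifs <;> simp
  rw [h, mul_zero, map_zero]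
  rfl


end St11

/-- claim (3.?) in Lemma 3.8: the measure
`m(S) = meas{v ∈ 𝕋^n : |f_i(v)| < q^{-S} ∀i}` equals `1` if `S < d`, and equals
`q^{(d-1-S)n}·N(t^{S+1-d})` if `S ≥ d`. -/
theorem statement11 (Fq : Type) [Field Fq] [Fintype Fq] (p d n R : ℕ)
    [Fact p.Prime] [CharP Fq p] (hd : 2 ≤ d) (hdp : d < p) (hn : d * R ≤ n)
    (f : Fin R → MvPolynomial (Fin n) Fq) (hsm : SmoothCI Fq d f)
    [MeasurableSpace (LaurentSeries Fq)]
    (μ : Measure (Fin n → LaurentSeries Fq))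
    (hinv : ∀ (a : Fin n → LaurentSeries Fq) (s : Set (Fin n → LaurentSeries Fq)),
      μ ((a + ·) ⁻¹' s) = μ s)
    (hbox : ∀ (c : Fin n → LaurentSeries Fq) (k : ℤ),
      MeasurableSet {v : Fin n → LaurentSeries Fq |
        ∀ i, absK Fq (v i - c i) < (Fintype.card Fq : ℝ≥0) ^ k})
    (hT : μ (TTn Fq n) = 1)
    (S : ℤ) :
    (S < d →
      μ {v | v ∈ TTn Fq n ∧ ∀ k, absK Fq (MvPolynomial.eval₂ HahnSeries.C v (f k))
            < (Fintype.card Fq : ℝ≥0) ^ (-S)} = 1) ∧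
    ((d : ℤ) ≤ S →
      μ {v | v ∈ TTn Fq n ∧ ∀ k, absK Fq (MvPolynomial.eval₂ HahnSeries.C v (f k))
            < (Fintype.card Fq : ℝ≥0) ^ (-S)}
        = (Fintype.card Fq : ENNReal) ^ (((d : ℤ) - 1 - S) * n) *
          (NsolP Fq f (Polynomial.X ^ (S + 1 - d).toNat) ((S + 1 - d).toNat)
            (fun _ => True) : ENNReal)) := by
  classical
  constructor
  · intro hS
    have hset : {v | v ∈ TTn Fq n ∧ ∀ k, absK Fq (MvPolynomial.eval₂ HahnSeries.C v (f k))
        < (Fintype.card Fq : ℝ≥0) ^ (-S)} = TTn Fq n := by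
      ext v
      simp only [Set.mem_setOf_eq]
      exact ⟨fun h => h.1, fun h => ⟨h, fun k => St11.eval_lt_of_TT hS (hsm.1 k)
        (fun i => (St11.absK_lt_one_iff _).mp (h i))⟩⟩
    rw [hset, hT]
  · intro hS
    set j : ℕ := (S + 1 - (d : ℤ)).toNat with hjdef
    have hj : (j : ℤ) = S + 1 - d := Int.toNat_of_nonneg (by omega)
    have hmeas : ∀ w : Fin n → Fin j → Fq, MeasurableSet (St11.box (Fq := Fq) j w) := by
      intro w
      rw [St11.box_eq_hbox]
      exact hbox (St11.ctr w) (-(j : ℤ))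
    have hdisj : ∀ w w' : Fin n → Fin j → Fq, w ≠ w' →
        Disjoint (St11.box (Fq := Fq) j w) (St11.box j w') := by
      intro w w' hne
      rw [Set.disjoint_left]
      intro v hv hv'
      exact hne (St11.box_disjoint hv hv')
    set m0 : ENNReal := μ (St11.box (Fq := Fq) j (fun _ _ => (0 : Fq))) with hm0
    have hμbox : ∀ w : Fin n → Fin j → Fq, μ (St11.box j w) = m0 := by
      intro w
      have h1 := hinv (St11.ctr w) (St11.box j w)
      have h2 : ((St11.ctr w + ·) ⁻¹' (St11.box j w))
          = St11.box (Fq := Fq) j (fun _ _ => (0 : Fq)) := by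
        ext v
        show (∀ i, (St11.ctr w i + v i) - St11.ctr w i ∈ St11.I Fq ((j : ℤ) + 1))
          ↔ (∀ i, v i - St11.ctr (fun _ _ => (0 : Fq)) i ∈ St11.I Fq ((j : ℤ) + 1))
        rw [St11.ctr_zero]
        have he : ∀ i, (St11.ctr w i + v i) - St11.ctr w i = v i := fun i => by ring
        simp only [he, Pi.zero_apply, sub_zero]
      rw [← h1, h2]
    have hq0 : (Fintype.card Fq : ENNReal) ≠ 0 := by
      exact_mod_cast Fintype.card_ne_zero
    have hqt : (Fintype.card Fq : ENNReal) ≠ ⊤ := ENNReal.natCast_ne_top _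
    have hpow0 : (Fintype.card Fq : ENNReal) ^ (j * n) ≠ 0 := pow_ne_zero _ hq0
    have hpowt : (Fintype.card Fq : ENNReal) ^ (j * n) ≠ ⊤ := ENNReal.pow_ne_top hqt
    have hcardN : Fintype.card (Fin n → Fin j → Fq) = Fintype.card Fq ^ (j * n) := by
      rw [Fintype.card_fun, Fintype.card_fun, Fintype.card_fin, Fintype.card_fin, ← pow_mul]
    have hsum : (1 : ENNReal) = (Fintype.card Fq : ENNReal) ^ (j * n) * m0 := by
      rw [← hT, St11.TTn_eq_iUnion_box j,
        measure_iUnion (fun w w' hne => hdisj w w' hne) hmeas, tsum_fintype]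
      simp_rw [hμbox]
      rw [Finset.sum_const, Finset.card_univ, hcardN, nsmul_eq_mul, Nat.cast_pow]
    have hm0val : m0 = ((Fintype.card Fq : ENNReal) ^ (j * n))⁻¹ := by
      calc m0 = (((Fintype.card Fq : ENNReal) ^ (j * n))⁻¹
            * ((Fintype.card Fq : ENNReal) ^ (j * n))) * m0 := by
            rw [ENNReal.inv_mul_cancel hpow0 hpowt, one_mul]
        _ = ((Fintype.card Fq : ENNReal) ^ (j * n))⁻¹
            * (((Fintype.card Fq : ENNReal) ^ (j * n)) * m0) := by rw [mul_assoc]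
        _ = ((Fintype.card Fq : ENNReal) ^ (j * n))⁻¹ := by rw [← hsum, mul_one]
    set P : (Fin n → Fin j → Fq) → Prop := fun w => ∀ k, (X : Polynomial Fq) ^ j ∣
        MvPolynomial.aeval (fun i => polyOf Fq (w i)) (f k) with hP
    have hA : {v | v ∈ TTn Fq n ∧ ∀ k, absK Fq (MvPolynomial.eval₂ HahnSeries.C v (f k))
        < (Fintype.card Fq : ℝ≥0) ^ (-S)}
        = ⋃ w ∈ Finset.univ.filter P, St11.box (Fq := Fq) j w := by
      ext v
      simp only [Set.mem_setOf_eq, Set.mem_iUnion, Finset.mem_filter, Finset.mem_univ,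
        true_and, exists_prop]
      constructor
      · rintro ⟨hvT, hvf⟩
        have hvI : ∀ i, v i ∈ St11.I Fq 1 := fun i => (St11.absK_lt_one_iff _).mp (hvT i)
        refine ⟨St11.wOf j v, ?_, St11.mem_box_wOf hvI⟩
        intro k
        exact (St11.box_cond_iff hS hj (hsm.1 k) (St11.mem_box_wOf hvI)).mp (hvf k)
      · rintro ⟨w, hw, hvw⟩
        exact ⟨fun i => (St11.absK_lt_one_iff _).mpr (St11.mem_I1_of_mem_box hvw i),
          fun k => (St11.box_cond_iff hS hj (hsm.1 k) hvw).mpr (hw k)⟩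
    rw [hA, measure_biUnion_finset (fun w _ w' _ hne => hdisj w w' hne) (fun w _ => hmeas w)]
    simp_rw [hμbox]
    rw [Finset.sum_const, nsmul_eq_mul]
    have hNsol : NsolP Fq f ((X : Polynomial Fq) ^ j) j (fun _ => True)
        = (Finset.univ.filter P).card := by
      have e : {z : Fin n → Polynomial Fq //
          (∀ i, (z i).degree < (j : WithBot ℕ)) ∧ (fun _ => True) z ∧
          ∀ k, (X : Polynomial Fq) ^ j ∣ MvPolynomial.aeval z (f k)}
          ≃ {w : Fin n → Fin j → Fq // P w} :=
      { toFun := fun z => ⟨fun i m => (z.1 i).coeff m, by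
          intro k
          have hz : (fun i => polyOf Fq (fun m : Fin j => (z.1 i).coeff (m : ℕ))) = z.1 :=
            funext fun i => St11.polyOf_of_coeff _ (z.2.1 i)
          show (X : Polynomial Fq) ^ j ∣ MvPolynomial.aeval
            (fun i => polyOf Fq (fun m : Fin j => (z.1 i).coeff (m : ℕ))) (f k)
          rw [hz]
          exact z.2.2.2 k⟩
        invFun := fun w => ⟨fun i => polyOf Fq (w.1 i),
          ⟨fun i => St11.polyOf_degree_lt _, trivial, w.2⟩⟩
        left_inv := fun z => Subtype.ext (funext fun i => St11.polyOf_of_coeff _ (z.2.1 i))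
        right_inv := fun w => Subtype.ext (funext fun i => funext fun m => by
          show (polyOf Fq (w.1 i)).coeff (m : ℕ) = w.1 i m
          rw [St11.polyOf_coeff, dif_pos m.isLt]) }
      show Nat.card _ = _
      rw [Nat.card_congr e, Nat.card_eq_fintype_card, Fintype.card_subtype]
    rw [hNsol, hm0val]
    have hxp : ((d : ℤ) - 1 - S) * (n : ℤ) = -(((j * n : ℕ) : ℤ)) := by
      have h1 : ((d : ℤ) - 1 - S) = -(j : ℤ) := by omega
      rw [h1]
      push_cast
      ring
    rw [hxp, ENNReal.zpow_neg, zpow_natCast, mul_comm]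
end
end
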